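/- arXiv:2503.06650 — 6 statements merged into one kernel-verified Lean document; each statement's English description precedes it below -/
import Mathlib

section
/- Let n ≥ 2, let λ_1, …, λ_n be real numbers, let U be an n × n unitary matrix, and set M = U* · Diag(λ_1, …, λ_n) · U. Then the characteristic polynomial of the top-left (n−1) × (n−1) submatrix of M equals Σ_{k=1}^n |U_{k,n}|² · ∏_{1 ≤ j ≤ n, j ≠ k} (z − λ_j) as polynomials in z. -/
open Polynomial Finset Matrix

private lemma adjugate_last_last {R : Type*} [CommRing R] {m : ℕ}
    (A : Matrix (Fin (m + 1)) (Fin (m + 1)) R) :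
    adjugate A (Fin.last m) (Fin.last m)
      = (A.submatrix (Fin.castSucc : Fin m → Fin (m + 1)) Fin.castSucc).det := by
  rw [Matrix.adjugate_apply, Matrix.det_succ_row _ (Fin.last m)]
  rw [Finset.sum_eq_single (Fin.last m)]
  · rw [Matrix.updateRow_self, Pi.single_eq_same]
    have h2 : ((A.updateRow (Fin.last m) (Pi.single (Fin.last m) 1)).submatrix
        ((Fin.last m).succAbove) ((Fin.last m).succAbove))
        = A.submatrix Fin.castSucc Fin.castSucc := by
      ext i j
      simp [Fin.succAbove_last, Matrix.updateRow_apply, (Fin.castSucc_lt_last i).ne]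
    rw [h2]
    have hsgn : (-1 : R) ^ (((Fin.last m) : ℕ) + ((Fin.last m) : ℕ)) = 1 := by
      rw [← two_mul, pow_mul]; simp
    rw [hsgn, one_mul, one_mul]
  · intro j _ hj
    rw [Matrix.updateRow_self, Pi.single_eq_of_ne hj]
    ring
  · simp

/-- Let `n ≥ 2` (here the dimension is `n + 2`), let `λ_1, …, λ_n` be
real numbers, let `U` be an `n × n` unitary matrix and set
`M = U* · Diag(λ_1, …, λ_n) · U`.  Then the characteristic polynomial of the top-left
`(n-1) × (n-1)` submatrix of `M` equals
`Σ_{k=1}^n |U_{k,n}|² · ∏_{j ≠ k} (z - λ_j)` as polynomials in `z`. -/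
theorem charpoly_minor_unitary_conjugate
    (n : ℕ) (lam : Fin (n + 2) → ℝ)
    (U : Matrix (Fin (n + 2)) (Fin (n + 2)) ℂ)
    (hU : U ∈ Matrix.unitaryGroup (Fin (n + 2)) ℂ) :
    ((Uᴴ * Matrix.diagonal (fun i => (lam i : ℂ)) * U).submatrix
        (Fin.castSucc : Fin (n + 1) → Fin (n + 2))
        (Fin.castSucc : Fin (n + 1) → Fin (n + 2))).charpoly
      = ∑ k : Fin (n + 2),
          C (((‖U k (Fin.last (n + 1))‖ : ℝ) : ℂ) ^ 2) *
            ∏ j ∈ Finset.univ.erase k, (X - C ((lam j : ℂ))) := by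
  classical
  set M : Matrix (Fin (n + 2)) (Fin (n + 2)) ℂ :=
    Uᴴ * Matrix.diagonal (fun i => (lam i : ℂ)) * U with hM
  -- Step 1 : charmatrix of submatrix is submatrix of charmatrix
  have hchar : charmatrix (M.submatrix (Fin.castSucc : Fin (n + 1) → Fin (n + 2)) Fin.castSucc)
      = (charmatrix M).submatrix Fin.castSucc Fin.castSucc := by
    ext i j
    by_cases h : i = j
    · subst h; simp [charmatrix_apply, Matrix.diagonal_apply]
    · have h' : (Fin.castSucc i) ≠ (Fin.castSucc j) := by
        simpa [Fin.castSucc_inj] using h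
      simp [charmatrix_apply, Matrix.diagonal_apply, h, h']
  have hlhs : (M.submatrix (Fin.castSucc : Fin (n + 1) → Fin (n + 2)) Fin.castSucc).charpoly
      = adjugate (charmatrix M) (Fin.last (n + 1)) (Fin.last (n + 1)) := by
    rw [Matrix.charpoly, hchar, ← adjugate_last_last]
  rw [hlhs]
  -- notation for mapped matrices
  set Uc : Matrix (Fin (n + 2)) (Fin (n + 2)) ℂ[X] := U.map Polynomial.C with hUc
  set Wc : Matrix (Fin (n + 2)) (Fin (n + 2)) ℂ[X] := Uᴴ.map Polynomial.C with hWc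
  have hWU : Wc * Uc = 1 := by
    have h1 : Uᴴ * U = 1 := hU.1
    have := congrArg (fun A : Matrix (Fin (n + 2)) (Fin (n + 2)) ℂ =>
      (Polynomial.C : ℂ →+* ℂ[X]).mapMatrix A) h1
    simpa [RingHom.mapMatrix_apply, Matrix.map_mul] using this
  have hUW : Uc * Wc = 1 := by
    have h1 : U * Uᴴ = 1 := hU.2
    have := congrArg (fun A : Matrix (Fin (n + 2)) (Fin (n + 2)) ℂ =>
      (Polynomial.C : ℂ →+* ℂ[X]).mapMatrix A) h1
    simpa [RingHom.mapMatrix_apply, Matrix.map_mul] using this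
  set P : Matrix (Fin (n + 2)) (Fin (n + 2)) ℂ[X] :=
    Matrix.diagonal (fun i => (X : ℂ[X]) - C ((lam i : ℂ))) with hP
  -- Step 2 : charmatrix M = Wc * P * Uc
  have hfact : charmatrix M = Wc * P * Uc := by
    have hPdec : P = (X : ℂ[X]) • (1 : Matrix (Fin (n + 2)) (Fin (n + 2)) ℂ[X])
        - (Matrix.diagonal (fun i => (lam i : ℂ))).map Polynomial.C := by
      ext i j
      by_cases h : i = j
      · subst h; simp [hP, Matrix.diagonal_apply, Matrix.one_apply]
      · simp [hP, Matrix.diagonal_apply, Matrix.one_apply, h]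
    have hMmap : M.map Polynomial.C
        = Wc * ((Matrix.diagonal (fun i => (lam i : ℂ))).map Polynomial.C) * Uc := by
      have := congrArg (fun A : Matrix (Fin (n + 2)) (Fin (n + 2)) ℂ =>
        (Polynomial.C : ℂ →+* ℂ[X]).mapMatrix A) hM
      simpa [RingHom.mapMatrix_apply, Matrix.map_mul] using this
    have hsc : Wc * ((X : ℂ[X]) • (1 : Matrix (Fin (n + 2)) (Fin (n + 2)) ℂ[X])) * Uc
        = (X : ℂ[X]) • (1 : Matrix (Fin (n + 2)) (Fin (n + 2)) ℂ[X]) := by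
      rw [Matrix.mul_smul, Matrix.mul_one, Matrix.smul_mul, hWU]
    have hcm : charmatrix M
        = (X : ℂ[X]) • (1 : Matrix (Fin (n + 2)) (Fin (n + 2)) ℂ[X]) - M.map Polynomial.C := by
      ext i j
      by_cases h : i = j
      · subst h; simp [charmatrix_apply, Matrix.diagonal_apply, Matrix.one_apply]
      · simp [charmatrix_apply, Matrix.diagonal_apply, Matrix.one_apply, h]
    rw [hcm, hPdec, hMmap, Matrix.mul_sub, Matrix.sub_mul, hsc]
  -- Step 3 : adjugate of the product
  have hadjU : adjugate Uc = Uc.det • Wc := by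
    have := Matrix.mul_adjugate Uc
    calc adjugate Uc = 1 * adjugate Uc := (one_mul _).symm
      _ = Wc * Uc * adjugate Uc := by rw [hWU]
      _ = Wc * (Uc * adjugate Uc) := by rw [Matrix.mul_assoc]
      _ = Wc * (Uc.det • 1) := by rw [this]
      _ = Uc.det • Wc := by rw [Matrix.mul_smul, Matrix.mul_one]
  have hadjW : adjugate Wc = Wc.det • Uc := by
    have := Matrix.mul_adjugate Wc
    calc adjugate Wc = 1 * adjugate Wc := (one_mul _).symm
      _ = Uc * Wc * adjugate Wc := by rw [hUW]
      _ = Uc * (Wc * adjugate Wc) := by rw [Matrix.mul_assoc]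
      _ = Uc * (Wc.det • 1) := by rw [this]
      _ = Wc.det • Uc := by rw [Matrix.mul_smul, Matrix.mul_one]
  have hdet : Uc.det * Wc.det = 1 := by
    rw [← Matrix.det_mul, hUW, Matrix.det_one]
  have hadj : adjugate (charmatrix M) = Wc * adjugate P * Uc := by
    rw [hfact, Matrix.adjugate_mul_distrib, Matrix.adjugate_mul_distrib, hadjU, hadjW]
    rw [Matrix.smul_mul, Matrix.mul_smul, Matrix.mul_smul, smul_smul, hdet,
      one_smul, Matrix.mul_assoc]
  rw [hadj, Matrix.adjugate_diagonal]
  -- Step 4 : compute the (last,last) entry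
  rw [Matrix.mul_apply]
  refine Finset.sum_congr rfl fun k _ => ?_
  rw [Matrix.mul_diagonal]
  have hW : Wc (Fin.last (n + 1)) k = C ((starRingEnd ℂ) (U k (Fin.last (n + 1)))) := by
    simp [hWc, Matrix.conjTranspose_apply]
  have hUe : Uc k (Fin.last (n + 1)) = C (U k (Fin.last (n + 1))) := by
    simp [hUc]
  rw [hW, hUe]
  have habs : (((‖U k (Fin.last (n + 1))‖ : ℝ) : ℂ)) ^ 2
      = (starRingEnd ℂ) (U k (Fin.last (n + 1))) * U k (Fin.last (n + 1)) := by
    rw [← Complex.normSq_eq_conj_mul_self]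
    norm_cast
    exact Complex.sq_norm _
  rw [habs, _root_.map_mul]
  ring
end

section
/- Let n ≥ 2, let λ_1, …, λ_n be real numbers, let U be an n × n real orthogonal matrix, and set M = Uᵀ · Diag(λ_1, …, λ_n) · U. Then the characteristic polynomial of the top-left (n−1) × (n−1) submatrix of M equals Σ_{k=1}^n (U_{k,n})² · ∏_{1 ≤ j ≤ n, j ≠ k} (z − λ_j) as polynomials in z. -/
open Polynomial Finset Matrix

/-- Let `n ≥ 2` (here the dimension is `n + 2`), let `λ_1, …, λ_n` be
real numbers, let `U` be an `n × n` real orthogonal matrix and set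
`M = Uᵀ · Diag(λ_1, …, λ_n) · U`.  Then the characteristic polynomial of the top-left
`(n-1) × (n-1)` submatrix of `M` equals
`Σ_{k=1}^n (U_{k,n})² · ∏_{j ≠ k} (z - λ_j)` as polynomials in `z`. -/
theorem charpoly_minor_orthogonal_conjugate
    (n : ℕ) (lam : Fin (n + 2) → ℝ)
    (U : Matrix (Fin (n + 2)) (Fin (n + 2)) ℝ)
    (hU : U ∈ Matrix.orthogonalGroup (Fin (n + 2)) ℝ) :
    ((Uᵀ * Matrix.diagonal lam * U).submatrix
        (Fin.castSucc : Fin (n + 1) → Fin (n + 2))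
        (Fin.castSucc : Fin (n + 1) → Fin (n + 2))).charpoly
      = ∑ k : Fin (n + 2),
          C ((U k (Fin.last (n + 1))) ^ 2) *
            ∏ j ∈ Finset.univ.erase k, (X - C (lam j)) := by
  classical
  have hstar : star U = Uᵀ := by
    ext i j; simp [Matrix.star_apply]
  have hUtU : Uᵀ * U = 1 := by
    have := hU.1; rwa [hstar] at this
  have hUUt : U * Uᵀ = 1 := by
    have := hU.2; rwa [hstar] at this
  set M := Uᵀ * Matrix.diagonal lam * U with hM
  -- charmatrix of submatrix equals submatrix of charmatrix
  have hcm : charmatrix (M.submatrix (Fin.castSucc : Fin (n+1) → Fin (n+2)) Fin.castSucc)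
      = (charmatrix M).submatrix Fin.castSucc Fin.castSucc := by
    ext i j
    by_cases h : i = j
    · subst h; simp
    · have h' : (i.castSucc : Fin (n+2)) ≠ j.castSucc := by
        simpa [Fin.castSucc_inj] using h
      simp [charmatrix_apply_ne _ _ _ h, charmatrix_apply_ne _ _ _ h']
  have key : (M.submatrix (Fin.castSucc : Fin (n+1) → Fin (n+2)) Fin.castSucc).charpoly
      = adjugate (charmatrix M) (Fin.last (n+1)) (Fin.last (n+1)) := by
    rw [Matrix.charpoly, hcm, adjugate_fin_succ_eq_det_submatrix, Fin.succAbove_last]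
    have h1 : ((-1 : ℝ[X])) ^ (((Fin.last (n+1)) : ℕ) + ((Fin.last (n+1)) : ℕ)) = 1 := by
      rw [← two_mul, pow_mul]; norm_num
    rw [h1, one_mul]
  rw [key]
  -- factor the charmatrix
  set V : Matrix (Fin (n+2)) (Fin (n+2)) ℝ[X] := U.map C with hV
  have hVtV : Vᵀ * V = 1 := by
    have := congrArg (Matrix.map · (C : ℝ →+* ℝ[X])) hUtU
    simpa [Matrix.map_mul, hV, Matrix.transpose_map] using this
  have hVVt : V * Vᵀ = 1 := by
    have := congrArg (Matrix.map · (C : ℝ →+* ℝ[X])) hUUt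
    simpa [Matrix.map_mul, hV, Matrix.transpose_map] using this
  have hfac : charmatrix M = Vᵀ * charmatrix (Matrix.diagonal lam) * V := by
    unfold charmatrix
    rw [Matrix.mul_sub, Matrix.sub_mul]
    congr 1
    · show (Matrix.diagonal fun _ => (X : ℝ[X])) = (Vᵀ * Matrix.diagonal fun _ => (X : ℝ[X])) * V
      rw [← smul_one_eq_diagonal, Matrix.mul_smul, Matrix.smul_mul, Matrix.mul_one, hVtV]
    · have : ((C : ℝ →+* ℝ[X]).mapMatrix (Matrix.diagonal lam)) = (Matrix.diagonal lam).map C := rfl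
      simp only [RingHom.mapMatrix_apply, hM, Matrix.map_mul, hV, Matrix.transpose_map]
  rw [hfac]
  -- adjugates
  have hadjV : adjugate V = (V.det) • Vᵀ := by
    have h1 : V * adjugate V = V.det • 1 := mul_adjugate V
    calc adjugate V = (Vᵀ * V) * adjugate V := by rw [hVtV, one_mul]
      _ = Vᵀ * (V * adjugate V) := by rw [Matrix.mul_assoc]
      _ = V.det • Vᵀ := by rw [h1, Matrix.mul_smul, mul_one]
  have hadjVt : adjugate Vᵀ = (V.det) • V := by
    have h1 : Vᵀ * adjugate Vᵀ = Vᵀ.det • 1 := mul_adjugate Vᵀ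
    calc adjugate Vᵀ = (V * Vᵀ) * adjugate Vᵀ := by rw [hVVt, one_mul]
      _ = V * (Vᵀ * adjugate Vᵀ) := by rw [Matrix.mul_assoc]
      _ = V.det • V := by rw [h1, Matrix.mul_smul, mul_one, Matrix.det_transpose]
  have hdet2 : V.det * V.det = 1 := by
    have := congrArg Matrix.det hVtV
    rwa [Matrix.det_mul, Matrix.det_transpose, Matrix.det_one] at this
  have hadj : adjugate (Vᵀ * charmatrix (Matrix.diagonal lam) * V)
      = Vᵀ * adjugate (charmatrix (Matrix.diagonal lam)) * V := by
    rw [adjugate_mul_distrib, adjugate_mul_distrib, hadjV, hadjVt]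
    simp [Matrix.smul_mul, Matrix.mul_smul, smul_smul, hdet2, Matrix.mul_assoc]
  rw [hadj]
  -- adjugate of charmatrix diagonal
  have hcd : charmatrix (Matrix.diagonal lam) = Matrix.diagonal (fun i => X - C (lam i)) := by
    ext i j
    by_cases h : i = j
    · subst h; simp
    · simp [charmatrix_apply_ne _ _ _ h, Matrix.diagonal_apply_ne _ h]
  rw [hcd, adjugate_diagonal]
  -- compute the entry
  rw [Matrix.mul_assoc, Matrix.mul_apply]
  congr 1
  ext k
  rw [Matrix.mul_apply, Finset.mul_sum]
  rw [Finset.sum_eq_single k]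
  · simp [hV, Matrix.diagonal_apply_eq, sq, mul_comm, mul_assoc, mul_left_comm]
  · intro b _ hb
    simp [Matrix.diagonal_apply_ne _ hb.symm]
  · simp
end

section
/- Let p ≥ 2, let λ_1 ≤ λ_2 ≤ … ≤ λ_p be real numbers, and let ρ_1, …, ρ_p be strictly positive reals with Σ_{j=1}^p ρ_j = 1. Then the degree p−1 monic polynomial Q(z) = Σ_{j=1}^p ρ_j ∏_{k ≠ j} (z − λ_k) has all its roots real, and its roots μ_1 ≤ μ_2 ≤ … ≤ μ_{p−1}, counted with multiplicity, interlace the λ_j: for every 1 ≤ j ≤ p−1 one has λ_j ≤ μ_j ≤ λ_{j+1}. In particular all roots of Q lie in the interval [λ_1, λ_p]. -/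
open Polynomial Finset


lemma core_strict (n : ℕ) (lam : Fin (n+2) → ℝ) (hlam : StrictMono lam)
    (ρ : Fin (n+2) → ℝ) (hρpos : ∀ j, 0 < ρ j) (hρsum : ∑ j, ρ j = 1) :
    ∃ μ : Fin (n+1) → ℝ,
      (∑ j : Fin (n+2), C (ρ j) * ∏ k ∈ Finset.univ.erase j, (X - C (lam k)))
        = ∏ i : Fin (n+1), (X - C (μ i)) ∧
      ∀ i : Fin (n+1), lam i.castSucc ≤ μ i ∧ μ i ≤ lam i.succ := by
  set Q : ℝ[X] := ∑ j : Fin (n+2), C (ρ j) * ∏ k ∈ univ.erase j, (X - C (lam k)) with hQdef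
  have hQlam : ∀ j, Q.eval (lam j) = ρ j * ∏ k ∈ univ.erase j, (lam j - lam k) := by
    intro j
    rw [hQdef, eval_finset_sum, Finset.sum_eq_single j]
    · simp [eval_prod]
    · intro b _ hb
      have hj : j ∈ univ.erase b := Finset.mem_erase.mpr ⟨Ne.symm hb, mem_univ j⟩
      rw [eval_mul, eval_prod]
      rw [Finset.prod_eq_zero hj (by simp)]
      ring
    · intro h; exact absurd (mem_univ j) h
  have hsign : ∀ j : Fin (n+2), 0 < (-1:ℝ)^(n+1-(j:ℕ)) * Q.eval (lam j) := by
    intro j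
    rw [hQlam]
    have hsplit : univ.erase j = Finset.Iio j ∪ Finset.Ioi j := by
      ext k; simp [lt_or_lt_iff_ne, ne_comm]
    have hdisj : Disjoint (Finset.Iio j) (Finset.Ioi j) :=
      Finset.disjoint_left.mpr fun k hk hk' =>
        absurd ((Finset.mem_Iio.mp hk).trans (Finset.mem_Ioi.mp hk')) (lt_irrefl _)
    rw [hsplit, Finset.prod_union hdisj]
    have h1 : 0 < ∏ k ∈ Finset.Iio j, (lam j - lam k) :=
      Finset.prod_pos fun k hk => sub_pos.mpr (hlam (Finset.mem_Iio.mp hk))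
    have h3 : 0 < ∏ k ∈ Finset.Ioi j, (lam k - lam j) :=
      Finset.prod_pos fun k hk => sub_pos.mpr (hlam (Finset.mem_Ioi.mp hk))
    have h2 : ∏ k ∈ Finset.Ioi j, (lam j - lam k)
        = (-1:ℝ)^(n+1-(j:ℕ)) * ∏ k ∈ Finset.Ioi j, (lam k - lam j) := by
      have hcard : (Finset.Ioi j).card = n+1-(j:ℕ) := by
        rw [Fin.card_Ioi]; omega
      calc ∏ k ∈ Finset.Ioi j, (lam j - lam k)
          = ∏ k ∈ Finset.Ioi j, (-1) * (lam k - lam j) := by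
            apply Finset.prod_congr rfl; intros; ring
        _ = _ := by rw [Finset.prod_mul_distrib, Finset.prod_const, hcard]
    rw [h2]
    have he : (-1:ℝ)^(n+1-(j:ℕ)) * ((-1:ℝ)^(n+1-(j:ℕ))) = 1 := by
      rw [← pow_add]
      exact Even.neg_one_pow ⟨_, rfl⟩
    have : (-1:ℝ)^(n+1-(j:ℕ)) * (ρ j * (( ∏ k ∈ Finset.Iio j, (lam j - lam k)) *
        ((-1:ℝ)^(n+1-(j:ℕ)) * ∏ k ∈ Finset.Ioi j, (lam k - lam j))))
        = ((-1:ℝ)^(n+1-(j:ℕ)) * ((-1:ℝ)^(n+1-(j:ℕ)))) * (ρ j *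
          ((∏ k ∈ Finset.Iio j, (lam j - lam k)) * ∏ k ∈ Finset.Ioi j, (lam k - lam j))) := by
      ring
    rw [this, he, one_mul]
    have := hρpos j
    positivity
  have hroot : ∀ i : Fin (n+1), ∃ x, x ∈ Set.Ioo (lam i.castSucc) (lam i.succ) ∧ Q.eval x = 0 := by
    intro i
    have hlt : lam i.castSucc < lam i.succ := hlam (Fin.castSucc_lt_succ (i := i))
    have e1 := hsign i.castSucc
    have e2 := hsign i.succ
    have hv1 : ((i.castSucc : Fin (n+2)) : ℕ) = (i:ℕ) := rfl
    have hv2 : ((i.succ : Fin (n+2)) : ℕ) = (i:ℕ) + 1 := rfl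
    have hi : (i:ℕ) ≤ n := Nat.lt_succ_iff.mp i.isLt
    rw [hv1, show n+1-(i:ℕ) = (n-(i:ℕ))+1 by omega, pow_succ] at e1
    rw [hv2, show n+1-((i:ℕ)+1) = n-(i:ℕ) by omega] at e2
    set t := (-1:ℝ)^(n-(i:ℕ)) with ht
    have htt : t * t = 1 := by rw [ht, ← pow_add]; exact Even.neg_one_pow ⟨_, rfl⟩
    set a := Q.eval (lam i.castSucc)
    set b := Q.eval (lam i.succ)
    have hab : a * b < 0 := by nlinarith [mul_pos e1 e2]
    rcases lt_or_ge a 0 with ha | ha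
    · have hb : 0 < b := by nlinarith
      have h0 : (0:ℝ) ∈ Set.Ioo a b := ⟨ha, hb⟩
      obtain ⟨x, hx, hxeq⟩ := intermediate_value_Ioo hlt.le (Q.continuous.continuousOn) h0
      exact ⟨x, hx, hxeq⟩
    · have ha' : 0 < a := lt_of_le_of_ne ha (fun h => by rw [← h, zero_mul] at hab; exact lt_irrefl 0 hab)
      have hb : b < 0 := by nlinarith
      have h0 : (0:ℝ) ∈ Set.Ioo b a := ⟨hb, ha'⟩
      obtain ⟨x, hx, hxeq⟩ := intermediate_value_Ioo' hlt.le (Q.continuous.continuousOn) h0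
      exact ⟨x, hx, hxeq⟩
  choose μ hμmem hμeval using hroot
  have hμmono : StrictMono μ := by
    rw [Fin.strictMono_iff_lt_succ]
    intro i
    have h1 := (hμmem i.castSucc).2
    have h2 := (hμmem i.succ).1
    rw [Fin.succ_castSucc] at h1
    exact h1.trans_le (le_of_lt h2)
  have hinj : Function.Injective μ := hμmono.injective
  -- degree/monic facts
  have hPmon : ∀ j : Fin (n+2), (∏ k ∈ univ.erase j, (X - C (lam k))).Monic :=
    fun j => monic_prod_of_monic _ _ fun k _ => monic_X_sub_C _
  have hPdeg : ∀ j : Fin (n+2), (∏ k ∈ univ.erase j, (X - C (lam k))).natDegree = n+1 := by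
    intro j
    rw [Polynomial.natDegree_prod_of_monic _ _ fun k _ => monic_X_sub_C _]
    simp
  have hQdegle : Q.natDegree ≤ n+1 := by
    rw [hQdef]
    apply Polynomial.natDegree_sum_le_of_forall_le
    intro j _
    calc (C (ρ j) * ∏ k ∈ univ.erase j, (X - C (lam k))).natDegree
        ≤ (C (ρ j)).natDegree + (∏ k ∈ univ.erase j, (X - C (lam k))).natDegree :=
          natDegree_mul_le
      _ ≤ n+1 := by simp [natDegree_C, hPdeg j]
  have hQcoeff : Q.coeff (n+1) = 1 := by
    rw [hQdef, finset_sum_coeff]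
    have hterm : ∀ j : Fin (n+2),
        (C (ρ j) * ∏ k ∈ univ.erase j, (X - C (lam k))).coeff (n+1) = ρ j := by
      intro j
      rw [coeff_C_mul]
      have h := (hPmon j).coeff_natDegree
      rw [hPdeg j] at h
      rw [h, mul_one]
    rw [Finset.sum_congr rfl fun j _ => hterm j, hρsum]
  have hQmonic : Q.Monic := Polynomial.monic_of_natDegree_le_of_coeff_eq_one _ hQdegle hQcoeff
  have hQdeg : Q.natDegree = n+1 :=
    le_antisymm hQdegle (Polynomial.le_natDegree_of_ne_zero (hQcoeff ▸ one_ne_zero))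
  have hQne : Q ≠ 0 := hQmonic.ne_zero
  have hsub : (Finset.image μ univ).val ≤ Q.roots := by
    rw [Multiset.le_iff_subset (Finset.image μ univ).nodup]
    intro x hx
    rw [Finset.mem_val, Finset.mem_image] at hx
    obtain ⟨i, -, rfl⟩ := hx
    rw [mem_roots hQne]
    exact hμeval i
  have hcard : Multiset.card (Finset.image μ univ).val = n+1 := by
    rw [← Finset.card_def, Finset.card_image_of_injective _ hinj, Finset.card_univ,
      Fintype.card_fin]
  have hrootseq : Q.roots = (Finset.image μ univ).val :=
    (Multiset.eq_of_le_of_card_le hsub (by rw [hcard, ← hQdeg]; exact card_roots' Q)).symm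
  have hsplits : Splits Q :=
    splits_iff_card_roots.mpr (by rw [hrootseq, hcard, hQdeg])
  have hfact := hsplits.eq_prod_roots_of_monic hQmonic
  rw [hrootseq] at hfact
  refine ⟨μ, ?_, fun i => ⟨(hμmem i).1.le, (hμmem i).2.le⟩⟩
  rw [hfact]
  rw [show (Multiset.map (fun a => X - C a) (Finset.image μ univ).val).prod
      = ∏ x ∈ Finset.image μ univ, (X - C x) from rfl]
  rw [Finset.prod_image fun x _ y _ h => hinj h]

lemma core (n : ℕ) : ∀ (lam : Fin (n+2) → ℝ), Monotone lam →
    ∀ (ρ : Fin (n+2) → ℝ), (∀ j, 0 < ρ j) → (∑ j, ρ j = 1) →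
    ∃ μ : Fin (n+1) → ℝ,
      (∑ j : Fin (n+2), C (ρ j) * ∏ k ∈ Finset.univ.erase j, (X - C (lam k)))
        = ∏ i : Fin (n+1), (X - C (μ i)) ∧
      ∀ i : Fin (n+1), lam i.castSucc ≤ μ i ∧ μ i ≤ lam i.succ := by
  induction n with
  | zero =>
    intro lam hlam ρ hρpos hρsum
    refine ⟨fun _ => ρ 0 * lam 1 + ρ 1 * lam 0, ?_, ?_⟩
    · have h01 : (univ.erase (0 : Fin 2)) = {1} := by decide
      have h10 : (univ.erase (1 : Fin 2)) = {0} := by decide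
      rw [Fin.sum_univ_two, h01, h10, Finset.prod_singleton, Finset.prod_singleton,
        Fin.prod_univ_one]
      have hsum2 : ρ 0 + ρ 1 = 1 := by rw [← Fin.sum_univ_two ρ]; exact hρsum
      have h1 : C (ρ 0) + C (ρ 1) = 1 := by rw [← C_add, hsum2, C_1]
      simp only [map_add, map_mul]
      linear_combination (X : ℝ[X]) * h1
    · intro i
      have hi : i = 0 := Fin.fin_one_eq_zero i
      subst hi
      have h01 : lam 0 ≤ lam 1 := hlam (by decide)
      have hsum2 : ρ 0 + ρ 1 = 1 := by rw [← Fin.sum_univ_two ρ]; exact hρsum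
      have hp0 := hρpos 0
      have hp1 := hρpos 1
      constructor
      · show lam ((0:Fin 1).castSucc) ≤ ρ 0 * lam 1 + ρ 1 * lam 0
        rw [show ((0 : Fin 1).castSucc) = (0 : Fin 2) from rfl]
        calc lam 0 = (ρ 0 + ρ 1) * lam 0 := by rw [hsum2]; ring
          _ ≤ ρ 0 * lam 1 + ρ 1 * lam 0 := by
              nlinarith [mul_nonneg hp0.le (sub_nonneg.mpr h01)]
      · show ρ 0 * lam 1 + ρ 1 * lam 0 ≤ lam ((0:Fin 1).succ)
        rw [show ((0 : Fin 1).succ) = (1 : Fin 2) from rfl]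
        calc ρ 0 * lam 1 + ρ 1 * lam 0 ≤ (ρ 0 + ρ 1) * lam 1 := by
              nlinarith [mul_nonneg hp1.le (sub_nonneg.mpr h01)]
          _ = lam 1 := by rw [hsum2]; ring
  | succ m ih =>
    intro lam hlam ρ hρpos hρsum
    by_cases hsm : ∀ i : Fin (m+2), lam i.castSucc < lam i.succ
    · exact core_strict (m+1) lam (Fin.strictMono_iff_lt_succ.mpr hsm) ρ hρpos hρsum
    push_neg at hsm
    obtain ⟨j, hj⟩ := hsm
    have hc : lam j.castSucc = lam j.succ :=
      le_antisymm (hlam (Fin.castSucc_lt_succ (i := j)).le) hj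
    set σ : Fin (m+2) → Fin (m+3) := (j.succ).succAbove with hσ
    have hσinj : Function.Injective σ := (Fin.succAbove_right_injective)
    have hσmono : StrictMono σ := Fin.strictMono_succAbove _
    set lam' : Fin (m+2) → ℝ := lam ∘ σ with hlam'def
    have hlam' : Monotone lam' := hlam.comp hσmono.monotone
    set ρ' : Fin (m+2) → ℝ := fun i => (if i = j then ρ j.succ else 0) + ρ (σ i) with hρ'def
    have hρ'pos : ∀ i, 0 < ρ' i := by
      intro i
      have := hρpos (σ i)
      have := hρpos j.succ
      show 0 < (if i = j then ρ j.succ else 0) + ρ (σ i)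
      split <;> linarith
    have hρ'sum : ∑ i, ρ' i = 1 := by
      rw [hρ'def]
      rw [Finset.sum_add_distrib, Finset.sum_ite_eq' univ j fun _ => ρ j.succ]
      have := Fin.sum_univ_succAbove ρ j.succ
      rw [hρsum] at this
      simp only [mem_univ, if_true]
      linarith [this]
    -- key product identities
    have himg : ∀ i : Fin (m+2), (univ.erase (σ i)).erase j.succ = Finset.image σ (univ.erase i) := by
      intro i
      ext k'
      simp only [Finset.mem_erase, Finset.mem_image, Finset.mem_univ, and_true]
      constructor
      · rintro ⟨h1, h2⟩
        obtain ⟨k, hk⟩ := Fin.exists_succAbove_eq h1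
        exact ⟨k, fun he => h2 (by rw [← hk, he]), hk⟩
      · rintro ⟨k, hk, rfl⟩
        exact ⟨Fin.succAbove_ne _ _, fun he => hk (hσinj he)⟩
    have himg2 : (univ : Finset (Fin (m+3))).erase j.succ = Finset.image σ univ := by
      ext k'
      simp only [Finset.mem_erase, Finset.mem_image, Finset.mem_univ, and_true, true_and]
      exact Fin.exists_succAbove_eq_iff.symm
    have step1 : ∀ i : Fin (m+2),
        (∏ k' ∈ univ.erase (σ i), (X - C (lam k')))
          = (X - C (lam j.succ)) * ∏ k ∈ univ.erase i, (X - C (lam' k)) := by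
      intro i
      have hmem : j.succ ∈ univ.erase (σ i) :=
        Finset.mem_erase.mpr ⟨(Fin.succAbove_ne _ _).symm, mem_univ _⟩
      rw [← Finset.mul_prod_erase _ _ hmem, himg i,
        Finset.prod_image fun x _ y _ h => hσinj h]
      rfl
    have step2 : (∏ k' ∈ univ.erase j.succ, (X - C (lam k')))
        = (X - C (lam j.succ)) * ∏ k ∈ univ.erase j, (X - C (lam' k)) := by
      rw [himg2, Finset.prod_image fun x _ y _ h => hσinj h]
      rw [show (∏ k : Fin (m+2), (X - C (lam (σ k)))) = ∏ k : Fin (m+2), (X - C (lam' k)) from rfl]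
      rw [← Finset.mul_prod_erase _ _ (mem_univ j)]
      have : lam' j = lam j.succ := by
        rw [hlam'def]
        show lam (σ j) = _
        rw [hσ, Fin.succAbove_of_castSucc_lt _ _ (Fin.castSucc_lt_succ (i := j)), hc]
      rw [this]
    have hQsplit :
        (∑ j' : Fin (m+3), C (ρ j') * ∏ k ∈ univ.erase j', (X - C (lam k)))
          = (X - C (lam j.succ)) *
            (∑ i : Fin (m+2), C (ρ' i) * ∏ k ∈ univ.erase i, (X - C (lam' k))) := by
      rw [Fin.sum_univ_succAbove (fun j' => C (ρ j') * ∏ k ∈ univ.erase j', (X - C (lam k))) j.succ]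
      rw [step2]
      have : ∀ i : Fin (m+2), C (ρ (σ i)) * ∏ k' ∈ univ.erase (σ i), (X - C (lam k'))
          = (X - C (lam j.succ)) * (C (ρ (σ i)) * ∏ k ∈ univ.erase i, (X - C (lam' k))) := by
        intro i; rw [step1 i]; ring
      rw [Finset.sum_congr rfl fun i _ => this i, ← Finset.mul_sum]
      have hρ'C : ∀ i : Fin (m+2), C (ρ' i) * ∏ k ∈ univ.erase i, (X - C (lam' k))
          = (if i = j then C (ρ j.succ) * ∏ k ∈ univ.erase j, (X - C (lam' k)) else 0)
            + C (ρ (σ i)) * ∏ k ∈ univ.erase i, (X - C (lam' k)) := by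
        intro i
        rw [hρ'def]
        show C ((if i = j then ρ j.succ else 0) + ρ (σ i)) * _ = _
        rw [map_add, add_mul]
        congr 1
        split_ifs with h
        · subst h; rfl
        · simp
      rw [Finset.sum_congr rfl fun i _ => hρ'C i, Finset.sum_add_distrib,
        Finset.sum_ite_eq' univ j]
      simp only [mem_univ, if_true]
      ring
    obtain ⟨μ', hμ'fact, hμ'int⟩ := ih lam' hlam' ρ' hρ'pos hρ'sum
    set μ : Fin (m+2) → ℝ := j.insertNth (lam j.succ) μ' with hμdef
    have hμj : μ j = lam j.succ := Fin.insertNth_apply_same j _ _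
    have hμsa : ∀ i' : Fin (m+1), μ (j.succAbove i') = μ' i' :=
      fun i' => Fin.insertNth_apply_succAbove j _ _ i'
    refine ⟨μ, ?_, ?_⟩
    · rw [hQsplit, hμ'fact, Fin.prod_univ_succAbove (fun i => X - C (μ i)) j, hμj]
      congr 1
      exact Finset.prod_congr rfl fun i' _ => by rw [hμsa i']
    · intro i
      by_cases hij : i = j
      · subst hij
        rw [hμj]
        exact ⟨le_of_eq hc, le_refl _⟩
      · obtain ⟨i', rfl⟩ := Fin.exists_succAbove_eq hij
        rw [hμsa i']
        obtain ⟨hint1, hint2⟩ := hμ'int i'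
        have hint1 : lam (σ i'.castSucc) ≤ μ' i' := hint1
        have hint2 : μ' i' ≤ lam (σ i'.succ) := hint2
        rcases lt_or_ge i'.castSucc j with hlt | hge
        · rw [Fin.succAbove_of_castSucc_lt _ _ hlt]
          have h1 : σ i'.castSucc = i'.castSucc.castSucc := by
            rw [hσ]; apply Fin.succAbove_of_castSucc_lt
            rw [Fin.lt_def] at hlt ⊢
            simp only [Fin.coe_castSucc, Fin.val_succ] at hlt ⊢
            omega
          have h2 : σ i'.succ = i'.succ.castSucc := by
            rw [hσ]; apply Fin.succAbove_of_castSucc_lt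
            rw [Fin.lt_def] at hlt ⊢
            simp only [Fin.coe_castSucc, Fin.val_succ] at hlt ⊢
            omega
          constructor
          · rw [← h1]; exact hint1
          · rw [Fin.succ_castSucc, ← h2]; exact hint2
        · rw [Fin.succAbove_of_le_castSucc _ _ hge]
          have h2 : σ i'.succ = i'.succ.succ := by
            rw [hσ]; apply Fin.succAbove_of_le_castSucc
            rw [Fin.le_def] at hge ⊢
            simp only [Fin.coe_castSucc, Fin.val_succ] at hge ⊢
            omega
          refine ⟨?_, by rw [← h2]; exact hint2⟩
          rcases eq_or_lt_of_le hge with heq | hlt2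
          · have hval : (j:ℕ) = (i':ℕ) := by
              have := congrArg Fin.val heq
              simpa using this
            have h1 : σ i'.castSucc = i'.castSucc.castSucc := by
              rw [hσ]; apply Fin.succAbove_of_castSucc_lt
              rw [Fin.lt_def]
              simp only [Fin.coe_castSucc, Fin.val_succ]
              omega
            have e1 : i'.succ.castSucc = j.succ := by
              apply Fin.ext
              simp only [Fin.coe_castSucc, Fin.val_succ]
              omega
            have e2 : i'.castSucc.castSucc = j.castSucc := by
              apply Fin.ext
              simp only [Fin.coe_castSucc]
              omega
            rw [e1, ← hc, ← e2, ← h1]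
            exact hint1
          · have h1 : σ i'.castSucc = i'.castSucc.succ := by
              rw [hσ]; apply Fin.succAbove_of_le_castSucc
              rw [Fin.lt_def] at hlt2
              rw [Fin.le_def]
              simp only [Fin.coe_castSucc, Fin.val_succ] at hlt2 ⊢
              omega
            rw [← Fin.succ_castSucc, ← h1]
            exact hint1

/-- Let `p ≥ 2` (here `p = n + 2`), let `λ_1 ≤ … ≤ λ_p` be real numbers
and let `ρ_1, …, ρ_p > 0` with `Σ ρ_j = 1`.  Then the monic degree `p - 1` polynomial
`Q(z) = Σ_j ρ_j ∏_{k ≠ j} (z - λ_k)` has all its roots real, and its roots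
`μ_1 ≤ … ≤ μ_{p-1}` (with multiplicity) interlace the `λ_j`:
`λ_j ≤ μ_j ≤ λ_{j+1}` for all `1 ≤ j ≤ p - 1`; in particular all roots of `Q` lie in
`[λ_1, λ_p]`. -/
theorem randomized_derivative_roots_real_and_interlace
    (n : ℕ) (lam : Fin (n + 2) → ℝ) (hlam : Monotone lam)
    (ρ : Fin (n + 2) → ℝ) (hρpos : ∀ j, 0 < ρ j) (hρsum : ∑ j, ρ j = 1) :
    ∃ μ : Fin (n + 1) → ℝ, Monotone μ ∧
      (∑ j : Fin (n + 2), C (ρ j) * ∏ k ∈ Finset.univ.erase j, (X - C (lam k)))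
        = ∏ i : Fin (n + 1), (X - C (μ i)) ∧
      (∀ j : Fin (n + 1), lam j.castSucc ≤ μ j ∧ μ j ≤ lam j.succ) ∧
      (∀ j : Fin (n + 1), lam 0 ≤ μ j ∧ μ j ≤ lam (Fin.last (n + 1))) := by
  obtain ⟨μ, hfact, hint⟩ := core n lam hlam ρ hρpos hρsum
  have hmono : Monotone μ := by
    rw [Fin.monotone_iff_le_succ]
    intro i
    have h1 := (hint i.castSucc).2
    rw [Fin.succ_castSucc] at h1
    exact h1.trans (hint i.succ).1
  refine ⟨μ, hmono, hfact, hint, fun j => ⟨?_, ?_⟩⟩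
  · exact (hlam (Fin.zero_le _)).trans (hint j).1
  · exact (hint j).2.trans (hlam (Fin.le_last _))
end

section
/- Let β > 0, A > 0 and δ > 0. There is a constant C depending only on β, A and δ such that the following holds for every integer N ≥ 2 and every 1 ≤ d ≤ N − 1. Let λ_1, …, λ_N ∈ [−A, A], let z > A + 1, and let γ_1, …, γ_N be i.i.d. random variables with the Gamma(β/2, 1) distribution. Then P( (Σ_{j=1}^N Y_j γ_j) / ((β/2) · Σ_{j=1}^N Y_j) ∉ (e^{−δ/2}, e^{δ/2}) ) ≤ C · N^{−3}. -/
set_option maxHeartbeats 1000000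

open Real

open MeasureTheory ProbabilityTheory Finset


/-- For an index `j` of `{1,…,N}`, `Y_j` is the sum over all injective `d`-tuples
`(j_1, …, j_d)` of pairwise distinct indices in `{1,…,N} \ {j}` of
`∏_{ℓ=1}^d (z - λ_{j_ℓ})`. -/
noncomputable def Yquant (N d : ℕ) (lam : Fin N → ℝ) (z : ℝ) (j : Fin N) : ℝ :=
  ∑ f ∈ Finset.univ.filter (fun f : Fin d ↪ Fin N => ∀ l, f l ≠ j),
    ∏ l : Fin d, (z - lam (f l))


lemma gammaPDF_mul_exp {a : ℝ} (ha : 0 < a) (s x : ℝ) (hs : s < 1) :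
    gammaPDF a 1 x * ENNReal.ofReal (Real.exp (s * x)) =
      ENNReal.ofReal ((1 - s) ^ (-a)) * gammaPDF a (1 - s) x := by
  have h1 : (0:ℝ) < 1 - s := by linarith
  rcases lt_or_ge x 0 with hx | hx
  · rw [gammaPDF_of_neg hx, gammaPDF_of_neg hx, zero_mul, mul_zero]
  · rw [gammaPDF_of_nonneg hx, gammaPDF_of_nonneg hx,
      ← ENNReal.ofReal_mul' (Real.exp_nonneg _),
      ← ENNReal.ofReal_mul (Real.rpow_nonneg h1.le _)]
    congr 1
    have key : (1 - s) ^ (-a) * (1 - s) ^ a = 1 := by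
      rw [← Real.rpow_add h1, neg_add_cancel, Real.rpow_zero]
    have hexp : Real.exp (-x) * Real.exp (s * x) = Real.exp (-((1 - s) * x)) := by
      rw [← Real.exp_add]; ring_nf
    have expand : (1 - s) ^ (-a) * ((1 - s) ^ a / Real.Gamma a * x ^ (a - 1) *
        Real.exp (-((1 - s) * x))) = ((1 - s) ^ (-a) * (1 - s) ^ a) *
        (1 / Real.Gamma a * x ^ (a - 1) * Real.exp (-((1 - s) * x))) := by ring
    rw [Real.one_rpow, expand, key, one_mul, one_mul, mul_assoc, hexp]

lemma lintegral_exp_gammaMeasure {a s : ℝ} (ha : 0 < a) (hs : s < 1) :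
    ∫⁻ x, ENNReal.ofReal (Real.exp (s * x)) ∂(gammaMeasure a 1) =
      ENNReal.ofReal ((1 - s) ^ (-a)) := by
  have h1 : (0:ℝ) < 1 - s := by linarith
  have hf : Measurable (gammaPDF a 1) := (measurable_gammaPDFReal a 1).ennreal_ofReal
  have hf' : Measurable (gammaPDF a (1 - s)) := (measurable_gammaPDFReal a (1-s)).ennreal_ofReal
  have hg : Measurable (fun x : ℝ => ENNReal.ofReal (Real.exp (s * x))) := by fun_prop
  rw [gammaMeasure, lintegral_withDensity_eq_lintegral_mul _ hf hg]
  calc ∫⁻ x, (gammaPDF a 1 * fun x => ENNReal.ofReal (Real.exp (s * x))) x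
      = ∫⁻ x, ENNReal.ofReal ((1 - s) ^ (-a)) * gammaPDF a (1 - s) x := by
        simp_rw [Pi.mul_apply]
        simp_rw [fun x => gammaPDF_mul_exp ha s x hs]
    _ = ENNReal.ofReal ((1 - s) ^ (-a)) := by
        rw [lintegral_const_mul _ hf', lintegral_gammaPDF_eq_one ha h1, mul_one]

lemma integrable_exp_gamma {a : ℝ} (ha : 0 < a) {s : ℝ} (hs : s < 1) :
    Integrable (fun x => Real.exp (s * x)) (gammaMeasure a 1) := by
  have hm : Measurable fun x : ℝ => Real.exp (s * x) := (measurable_id'.const_mul s).exp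
  refine ⟨(hm.aestronglyMeasurable), ?_⟩
  have h : ∫⁻ x, ‖Real.exp (s * x)‖ₑ ∂(gammaMeasure a 1) =
      ENNReal.ofReal ((1 - s) ^ (-a)) := by
    simp_rw [Real.enorm_eq_ofReal (Real.exp_nonneg _)]
    exact lintegral_exp_gammaMeasure ha hs
  rw [HasFiniteIntegral, h]
  exact ENNReal.ofReal_lt_top

lemma mgf_of_map_gamma {a : ℝ} (ha : 0 < a) {Ω : Type} [MeasurableSpace Ω] {P : Measure Ω}
    {γ : Ω → ℝ} (hγ : Measurable γ) (hmap : Measure.map γ P = gammaMeasure a 1)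
    {s : ℝ} (hs : s < 1) :
    Integrable (fun ω => Real.exp (s * γ ω)) P ∧ mgf γ P s = (1 - s) ^ (-a) := by
  have h1 : (0:ℝ) < 1 - s := by linarith
  have hInt := integrable_exp_gamma ha hs
  have hasm : AEStronglyMeasurable (fun x => Real.exp (s * x)) (Measure.map γ P) :=
    (show Measurable fun x : ℝ => Real.exp (s * x) from (measurable_id'.const_mul s).exp).aestronglyMeasurable
  constructor
  · exact (integrable_map_measure hasm hγ.aemeasurable).mp (by rwa [hmap])
  · rw [mgf, ← integral_map hγ.aemeasurable hasm, hmap,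
      integral_eq_lintegral_of_nonneg_ae (ae_of_all _ fun x => Real.exp_nonneg _)
        (show Measurable fun x : ℝ => Real.exp (s * x) from (measurable_id'.const_mul s).exp).aestronglyMeasurable,
      lintegral_exp_gammaMeasure ha hs, ENNReal.toReal_ofReal (Real.rpow_nonneg h1.le _)]

lemma neg_log_one_sub_le {s : ℝ} (hs : s ≤ 1/2) : -Real.log (1 - s) ≤ s + 2*s^2 := by
  have h1 : (0:ℝ) < 1 - s := by linarith
  have h2 := Real.log_le_sub_one_of_pos (inv_pos.mpr h1)
  rw [Real.log_inv] at h2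
  have h3 : (1 - s) * (1 - s)⁻¹ = 1 := mul_inv_cancel₀ h1.ne'
  have key : 1 ≤ (1 + s + 2*s^2) * (1 - s) := by nlinarith [sq_nonneg s]
  have h4 : (1 - s)⁻¹ ≤ 1 + s + 2*s^2 := by
    have := mul_le_mul_of_nonneg_right key (inv_nonneg.mpr h1.le)
    rw [one_mul, mul_assoc, h3, mul_one] at this
    exact this
  linarith

lemma rpow_neg_le_exp_aux {m s : ℝ} (hm : 0 ≤ m) (hs : s ≤ 1/2) :
    (1 - s) ^ (-m) ≤ Real.exp (m * (s + 2*s^2)) := by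
  have h1 : (0:ℝ) < 1 - s := by linarith
  rw [Real.rpow_def_of_pos h1, Real.exp_le_exp]
  have := mul_le_mul_of_nonneg_left (neg_log_one_sub_le hs) hm
  nlinarith [this]

lemma exp_neg_le_cube (x : ℝ) (hx : 0 < x) : Real.exp (-x) ≤ 27 / x^3 := by
  have h := Real.add_one_le_exp (x/3)
  have h2 : x/3 ≤ Real.exp (x/3) := by linarith
  have h3 : (x/3)^3 ≤ Real.exp (x/3)^3 :=
    pow_le_pow_left₀ (by positivity) h2 3
  have h4 : Real.exp (x/3)^3 = Real.exp x := by
    rw [← Real.exp_nat_mul]; norm_num; ring_nf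
  have h5 : x^3/27 ≤ Real.exp x := by
    calc x^3/27 = (x/3)^3 := by ring
      _ ≤ Real.exp (x/3)^3 := h3
      _ = Real.exp x := h4
  rw [Real.exp_neg]
  have hx3 : (0:ℝ) < x^3/27 := by positivity
  calc (Real.exp x)⁻¹ ≤ (x^3/27)⁻¹ := by
        apply inv_anti₀ hx3 h5
    _ = 27 / x^3 := by rw [inv_div]

lemma Yquant_nonneg {N d : ℕ} {lam : Fin N → ℝ} {z : ℝ}
    (hz : ∀ i, 0 < z - lam i) (j : Fin N) : 0 ≤ Yquant N d lam z j :=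
  Finset.sum_nonneg fun f _ => Finset.prod_nonneg fun l _ => (hz _).le

lemma Yquant_pos {N d : ℕ} (hN : 1 ≤ N) (hd : d ≤ N - 1) {lam : Fin N → ℝ} {z : ℝ}
    (hz : ∀ i, 0 < z - lam i) (j : Fin N) : 0 < Yquant N d lam z j := by
  apply Finset.sum_pos (fun f _ => Finset.prod_pos fun l _ => hz _)
  have hcard : Fintype.card (Fin d) ≤ Fintype.card {i : Fin N // i ≠ j} := by
    rw [Fintype.card_fin, Fintype.card_subtype_compl, Fintype.card_subtype_eq, Fintype.card_fin]
    exact hd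
  obtain ⟨e⟩ := Function.Embedding.nonempty_of_card_le hcard
  exact ⟨e.trans (Function.Embedding.subtype _),
    Finset.mem_filter.mpr ⟨Finset.mem_univ _, fun l => (e l).2⟩⟩

lemma Yquant_le_swap {N d : ℕ} {lam : Fin N → ℝ} {z A : ℝ} (hA : 0 < A)
    (hlam : ∀ i, lam i ∈ Set.Icc (-A) A) (hz : A + 1 < z) (j k : Fin N) :
    Yquant N d lam z j ≤ (1 + 2 * A) * Yquant N d lam z k := by
  set K : ℝ := 1 + 2 * A with hK
  have hK1 : (1:ℝ) ≤ K := by simp [hK]; linarith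
  have hzpos : ∀ i, 0 < z - lam i := fun i => by
    have := (hlam i).2; linarith [(hlam i).1, (hlam i).2]
  rcases eq_or_ne j k with rfl | hjk
  · exact le_mul_of_one_le_left (Yquant_nonneg hzpos j) hK1
  set σ := Equiv.swap j k with hσ
  have hswap : ∀ f ∈ Finset.univ.filter (fun f : Fin d ↪ Fin N => ∀ l, f l ≠ j),
      ∏ l : Fin d, (z - lam (f l)) ≤ K * ∏ l : Fin d, (z - lam (σ (f l))) := by
    intro f hf
    rw [Finset.mem_filter] at hf
    have hfac : ∀ l : Fin d,
        (z - lam (f l)) ≤ (if f l = k then K else 1) * (z - lam (σ (f l))) := by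
      intro l
      by_cases h : f l = k
      · rw [if_pos h, h, hσ, Equiv.swap_apply_right]
        have h1 := (hlam k).1; have h2 := (hlam k).2
        have h3 := (hlam j).1; have h4 := (hlam j).2
        nlinarith
      · rw [if_neg h, hσ, Equiv.swap_apply_of_ne_of_ne (hf.2 l) h, one_mul]
    calc ∏ l : Fin d, (z - lam (f l))
        ≤ ∏ l : Fin d, ((if f l = k then K else 1) * (z - lam (σ (f l)))) :=
          Finset.prod_le_prod (fun l _ => (hzpos _).le) (fun l _ => hfac l)
      _ = (∏ l : Fin d, if f l = k then K else 1) * ∏ l : Fin d, (z - lam (σ (f l))) :=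
          Finset.prod_mul_distrib
      _ ≤ K * ∏ l : Fin d, (z - lam (σ (f l))) := by
          apply mul_le_mul_of_nonneg_right _ (Finset.prod_nonneg fun l _ => (hzpos _).le)
          rw [Finset.prod_ite, Finset.prod_const, Finset.prod_const_one, mul_one]
          have hc : (Finset.univ.filter (fun l : Fin d => f l = k)).card ≤ 1 := by
            apply Finset.card_le_one.mpr
            intro a ha b hb
            rw [Finset.mem_filter] at ha hb
            exact f.injective (ha.2.trans hb.2.symm)
          calc K ^ (Finset.univ.filter (fun l : Fin d => f l = k)).card
              ≤ K ^ 1 := pow_le_pow_right₀ hK1 hc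
            _ = K := pow_one K
  calc Yquant N d lam z j ≤ ∑ f ∈ Finset.univ.filter (fun f : Fin d ↪ Fin N => ∀ l, f l ≠ j),
        K * ∏ l : Fin d, (z - lam (σ (f l))) := Finset.sum_le_sum hswap
    _ = K * ∑ f ∈ Finset.univ.filter (fun f : Fin d ↪ Fin N => ∀ l, f l ≠ j),
        ∏ l : Fin d, (z - lam (σ (f l))) := (Finset.mul_sum _ _ _).symm
    _ = K * Yquant N d lam z k := by
        congr 1
        apply Finset.sum_nbij' (i := fun f => f.trans σ.toEmbedding)
          (j := fun g => g.trans σ.toEmbedding)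
        · intro f hf
          rw [Finset.mem_filter] at hf ⊢
          refine ⟨Finset.mem_univ _, fun l => ?_⟩
          simpa [hσ, Equiv.swap_apply_left] using σ.injective.ne (hf.2 l)
        · intro g hg
          rw [Finset.mem_filter] at hg ⊢
          refine ⟨Finset.mem_univ _, fun l => ?_⟩
          simpa [hσ, Equiv.swap_apply_right] using σ.injective.ne (hg.2 l)
        · intro f _
          ext l
          simp [hσ, Equiv.swap_apply_self]
        · intro g _
          ext l
          simp [hσ, Equiv.swap_apply_self]
        · intro f _
          rfl

/-- Let `β > 0`, `A > 0` and `δ > 0`.  There is a constant `C`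
depending only on `β`, `A` and `δ` such that for every `N ≥ 2`, `1 ≤ d ≤ N - 1`,
`λ_1, …, λ_N ∈ [-A, A]`, `z > A + 1`, and `γ_1, …, γ_N` i.i.d. `Gamma(β/2, 1)`:
`P( (Σ_j Y_j γ_j) / ((β/2) Σ_j Y_j) ∉ (e^{-δ/2}, e^{δ/2}) ) ≤ C N⁻³`. -/
theorem gamma_weighted_Y_ratio_concentration
    (β A δ : ℝ) (hβ : 0 < β) (hA : 0 < A) (hδ : 0 < δ) :
    ∃ C : ℝ,
      ∀ (N d : ℕ), 2 ≤ N → 1 ≤ d → d ≤ N - 1 →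
      ∀ (lam : Fin N → ℝ), (∀ j, lam j ∈ Set.Icc (-A) A) →
      ∀ (z : ℝ), A + 1 < z →
      ∀ (Ω : Type) (_ : MeasurableSpace Ω) (P : Measure Ω), IsProbabilityMeasure P →
      ∀ (γ : Fin N → Ω → ℝ),
        (∀ j, Measurable (γ j)) →
        iIndepFun γ P →
        (∀ j, Measure.map (γ j) P = gammaMeasure (β / 2) 1) →
        (P {ω | (∑ j, Yquant N d lam z j * γ j ω) / ((β / 2) * ∑ j, Yquant N d lam z j) ∉
            Set.Ioo (Real.exp (-δ / 2)) (Real.exp (δ / 2))}).toReal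
          ≤ C * ((N : ℝ) ^ 3)⁻¹ := by
  classical
  set K : ℝ := 1 + 2 * A with hKdef
  have hK0 : (0:ℝ) < K := by rw [hKdef]; linarith
  have hK1 : (1:ℝ) ≤ K := by rw [hKdef]; linarith
  set b : ℝ := Real.exp (δ / 2) with hbdef
  set a0 : ℝ := Real.exp (-δ / 2) with ha0def
  have hb : 1 < b := by
    rw [hbdef, ← Real.exp_zero]; exact Real.exp_lt_exp.mpr (by linarith)
  have ha0 : a0 < 1 := by
    rw [ha0def, ← Real.exp_zero]; exact Real.exp_lt_exp.mpr (by linarith)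
  have ha0pos : 0 < a0 := Real.exp_pos _
  set c : ℝ := min ((b-1)/(4*K)) (min ((1-a0)/(4*K)) (1/(2*K))) with hcdef
  have hc0 : 0 < c :=
    lt_min (div_pos (by linarith) (by linarith))
      (lt_min (div_pos (by linarith) (by linarith)) (div_pos one_pos (by linarith)))
  have hc1 : c ≤ (b-1)/(4*K) := min_le_left _ _
  have hc2 : c ≤ (1-a0)/(4*K) := (min_le_right _ _).trans (min_le_left _ _)
  have hc3 : c ≤ 1/(2*K) := (min_le_right _ _).trans (min_le_right _ _)
  have hdivK : ((b-1)/(4*K))*K = (b-1)/4 := by field_simp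
  have hdivK2 : ((1-a0)/(4*K))*K = (1-a0)/4 := by field_simp
  have hdivK3 : (1/(2*K))*K = 1/2 := by field_simp
  have hcK : c * K ≤ 1/2 := by
    have := mul_le_mul_of_nonneg_right hc3 hK0.le; linarith
  have hcKb : 2*(c*K) ≤ (b-1)/2 := by
    have := mul_le_mul_of_nonneg_right hc1 hK0.le; linarith
  have hcKa : 2*(c*K) ≤ (1-a0)/2 := by
    have := mul_le_mul_of_nonneg_right hc2 hK0.le; linarith
  set m : ℝ := β/2 with hmdef
  have hm0 : 0 < m := by rw [hmdef]; linarith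
  set ε : ℝ := m * c * min (b-1) (1-a0) / 2 with hεdef
  have hε0 : 0 < ε := by
    apply div_pos (mul_pos (mul_pos hm0 hc0) (lt_min (by linarith) (by linarith))) two_pos
  have hεb : ε ≤ m*c*(b-1)/2 := by
    have h := mul_le_mul_of_nonneg_left (min_le_left (b-1) (1-a0)) (mul_pos hm0 hc0).le
    rw [hεdef]; linarith
  have hεa : ε ≤ m*c*(1-a0)/2 := by
    have h := mul_le_mul_of_nonneg_left (min_le_right (b-1) (1-a0)) (mul_pos hm0 hc0).le
    rw [hεdef]; linarith
  clear_value K b a0 c ε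
  refine ⟨2 * 27 / ε^3, ?_⟩
  intro N d hN hd1 hd lam hlam z hz Ω mΩ P hP γ hγmeas hindep hγmap
  haveI := hP
  have hN0 : (0:ℝ) < N := by
    have : 0 < N := by omega
    exact_mod_cast this
  have hzpos : ∀ i, 0 < z - lam i := by
    intro i; have h2 := (hlam i).2; linarith
  set Y : Fin N → ℝ := fun j => Yquant N d lam z j with hYdef
  set T : ℝ := ∑ j, Y j with hTdef
  have hTY : T = ∑ j, Yquant N d lam z j := by
    simp only [hTdef, hYdef]
  have hYpos : ∀ j, 0 < Y j := fun j => Yquant_pos (by omega) hd hzpos j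
  have hTpos : 0 < T := Finset.sum_pos (fun j _ => hYpos j) ⟨⟨0, by omega⟩, Finset.mem_univ _⟩
  have hYK : ∀ j, (N:ℝ) * Y j ≤ K * T := by
    intro j
    calc (N:ℝ) * Y j = ∑ _k : Fin N, Y j := by
          rw [Finset.sum_const, Finset.card_univ, Fintype.card_fin, nsmul_eq_mul]
      _ ≤ ∑ k, K * Y k :=
          Finset.sum_le_sum (fun k _ => by rw [hKdef]; exact Yquant_le_swap hA hlam hz j k)
      _ = K * T := by rw [← Finset.mul_sum, hTdef]
  set Xf : Fin N → Ω → ℝ := fun j ω => Y j * γ j ω with hXfdef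
  set X : Ω → ℝ := ∑ j, Xf j with hXdef
  have hXapp : ∀ ω, X ω = ∑ j, Yquant N d lam z j * γ j ω := by
    intro ω; rw [hXdef]; simp [hXfdef, hYdef]
  have hXfmeas : ∀ j, Measurable (Xf j) := fun j => (hγmeas j).const_mul _
  have hindep' : iIndepFun Xf P :=
    hindep.comp (fun j x => Y j * x) (fun j => measurable_id'.const_mul _)
  clear_value Y T Xf X
  -- generic mgf bound
  have key : ∀ t : ℝ, (∀ j, t * Y j ≤ 1/2) →
      Integrable (fun ω => Real.exp (t * X ω)) P ∧
      mgf X P t ≤ Real.exp (∑ j, m * (t * Y j + 2*(t*Y j)^2)) := by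
    intro t hsmall
    have hint : ∀ j, Integrable (fun ω => Real.exp (t * Xf j ω)) P := by
      intro j
      have h := (mgf_of_map_gamma hm0 (hγmeas j) (hγmap j)
        (s := t * Y j) (by linarith [hsmall j])).1
      simpa only [hXfdef, mul_assoc] using h
    constructor
    · rw [hXdef]; exact hindep'.integrable_exp_mul_sum hXfmeas (fun j _ => hint j)
    · rw [hXdef, hindep'.mgf_sum hXfmeas]
      calc ∏ j, mgf (Xf j) P t
          ≤ ∏ j, Real.exp (m * (t*Y j + 2*(t*Y j)^2)) := by
            apply Finset.prod_le_prod (fun j _ => mgf_nonneg)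
            intro j _
            have heq : mgf (Xf j) P t = mgf (γ j) P (t * Y j) := by
              simp only [mgf, hXfdef, mul_assoc]
            rw [heq, (mgf_of_map_gamma hm0 (hγmeas j) (hγmap j)
              (s := t * Y j) (by linarith [hsmall j])).2]
            exact rpow_neg_le_exp_aux hm0.le (hsmall j)
        _ = Real.exp (∑ j, m * (t*Y j + 2*(t*Y j)^2)) := (Real.exp_sum _ _).symm
  have hsum_split : ∀ t : ℝ, ∑ j, m * (t*Y j + 2*(t*Y j)^2)
      = m * (∑ j, t*Y j) + 2*m*(∑ j, (t*Y j)^2) := by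
    intro t
    rw [Finset.mul_sum, Finset.mul_sum, ← Finset.sum_add_distrib]
    apply Finset.sum_congr rfl; intros; ring
  set t : ℝ := c*(N:ℝ)/T with htdef
  have ht0 : 0 < t := div_pos (mul_pos hc0 hN0) hTpos
  have htT : t * T = c * (N:ℝ) := by rw [htdef, div_mul_cancel₀ _ hTpos.ne']
  have hsjK : ∀ j, t * Y j ≤ c*K := by
    intro j
    rw [htdef, div_mul_eq_mul_div, div_le_iff₀ hTpos]
    nlinarith [mul_le_mul_of_nonneg_left (hYK j) hc0.le]
  clear_value t
  have hsj : ∀ j, t * Y j ≤ 1/2 := fun j => (hsjK j).trans hcK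
  have hsnn : ∀ j, 0 ≤ t * Y j := fun j => (mul_pos ht0 (hYpos j)).le
  have hsumU : ∑ j, t*Y j = c*(N:ℝ) := by rw [← Finset.mul_sum, ← hTdef, htT]
  have hsqU : ∑ j, (t*Y j)^2 ≤ (c*K)*(c*(N:ℝ)) := by
    calc ∑ j, (t*Y j)^2 ≤ ∑ j, (c*K)*(t*Y j) :=
          Finset.sum_le_sum (fun j _ => by nlinarith [hsjK j, hsnn j])
      _ = (c*K)*(c*(N:ℝ)) := by rw [← Finset.mul_sum, hsumU]
  -- upper tail
  have hup : (P {ω | b*(m*T) ≤ X ω}).toReal ≤ Real.exp (-(ε*(N:ℝ))) := by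
    have hcher := measure_ge_le_exp_mul_mgf (μ := P) (X := X) (b*(m*T)) ht0.le (key t hsj).1
    have hmgf : mgf X P t ≤ Real.exp (m*(c*(N:ℝ)) + 2*m*((c*K)*(c*(N:ℝ)))) := by
      refine (key t hsj).2.trans (Real.exp_le_exp.mpr ?_)
      rw [hsum_split t, hsumU]
      nlinarith [hsqU, hm0]
    calc (P {ω | b*(m*T) ≤ X ω}).toReal
        ≤ Real.exp (-t * (b*(m*T))) * mgf X P t := hcher
      _ ≤ Real.exp (-t * (b*(m*T))) *
          Real.exp (m*(c*(N:ℝ)) + 2*m*((c*K)*(c*(N:ℝ)))) := by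
          exact mul_le_mul_of_nonneg_left hmgf (Real.exp_pos _).le
      _ = Real.exp (-t * (b*(m*T)) + (m*(c*(N:ℝ)) + 2*m*((c*K)*(c*(N:ℝ))))) :=
          (Real.exp_add _ _).symm
      _ ≤ Real.exp (-(ε*(N:ℝ))) := by
          apply Real.exp_le_exp.mpr
          have harg : -t * (b*(m*T)) = -(b*m*(c*(N:ℝ))) := by
            rw [show -t * (b*(m*T)) = -(b*m*(t*T)) by ring, htT]
          rw [harg]
          nlinarith [mul_le_mul_of_nonneg_left hcKb
              (mul_nonneg (mul_nonneg hm0.le hc0.le) hN0.le),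
            mul_le_mul_of_nonneg_right hεb hN0.le]
  -- lower tail
  have hlow : (P {ω | X ω ≤ a0*(m*T)}).toReal ≤ Real.exp (-(ε*(N:ℝ))) := by
    have hsj' : ∀ j, (-t) * Y j ≤ 1/2 := by
      intro j; have := hsnn j; nlinarith
    have hcher := measure_le_le_exp_mul_mgf (μ := P) (X := X) (a0*(m*T))
      (by linarith : -t ≤ 0) (key (-t) hsj').1
    have hsumL : ∑ j, (-t)*Y j = -(c*(N:ℝ)) := by
      have : ∑ j, (-t)*Y j = -∑ j, t*Y j := by
        rw [← Finset.sum_neg_distrib]; apply Finset.sum_congr rfl; intros; ring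
      rw [this, hsumU]
    have hsqL : ∑ j, ((-t)*Y j)^2 ≤ (c*K)*(c*(N:ℝ)) := by
      have : ∑ j, ((-t)*Y j)^2 = ∑ j, (t*Y j)^2 := by
        apply Finset.sum_congr rfl; intros; ring
      rw [this]; exact hsqU
    have hmgf : mgf X P (-t) ≤ Real.exp (m*(-(c*(N:ℝ))) + 2*m*((c*K)*(c*(N:ℝ)))) := by
      refine (key (-t) hsj').2.trans (Real.exp_le_exp.mpr ?_)
      rw [hsum_split (-t), hsumL]
      nlinarith [hsqL, hm0]
    calc (P {ω | X ω ≤ a0*(m*T)}).toReal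
        ≤ Real.exp (-(-t) * (a0*(m*T))) * mgf X P (-t) := hcher
      _ ≤ Real.exp (-(-t) * (a0*(m*T))) *
          Real.exp (m*(-(c*(N:ℝ))) + 2*m*((c*K)*(c*(N:ℝ)))) := by
          exact mul_le_mul_of_nonneg_left hmgf (Real.exp_pos _).le
      _ = Real.exp (-(-t) * (a0*(m*T)) + (m*(-(c*(N:ℝ))) + 2*m*((c*K)*(c*(N:ℝ))))) :=
          (Real.exp_add _ _).symm
      _ ≤ Real.exp (-(ε*(N:ℝ))) := by
          apply Real.exp_le_exp.mpr
          have harg : -(-t) * (a0*(m*T)) = a0*m*(c*(N:ℝ)) := by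
            rw [show -(-t) * (a0*(m*T)) = a0*m*(t*T) by ring, htT]
          rw [harg]
          have h1 : (m*c*(N:ℝ)) * (2*(c*K)) ≤ (m*c*(N:ℝ)) * ((1-a0)/2) :=
            mul_le_mul_of_nonneg_left hcKa (mul_nonneg (mul_nonneg hm0.le hc0.le) hN0.le)
          have h2 : ε*(N:ℝ) ≤ (m*c*(1-a0)/2)*(N:ℝ) :=
            mul_le_mul_of_nonneg_right hεa hN0.le
          linarith [h1, h2]
  -- event inclusion
  have hmT : 0 < m * T := mul_pos hm0 hTpos
  have hsub : {ω | (∑ j, Yquant N d lam z j * γ j ω) / (m * T) ∉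
      Set.Ioo a0 b} ⊆ {ω | X ω ≤ a0*(m*T)} ∪ {ω | b*(m*T) ≤ X ω} := by
    intro ω hω
    simp only [Set.mem_setOf_eq, Set.mem_Ioo, not_and_or, not_lt] at hω
    rw [← hXapp ω] at hω
    rcases hω with h | h
    · left
      exact Set.mem_setOf_eq ▸ (div_le_iff₀ hmT).mp h
    · right
      exact Set.mem_setOf_eq ▸ (le_div_iff₀ hmT).mp h
  -- combine
  have hmeasle : (P {ω | (∑ j, Yquant N d lam z j * γ j ω) /
      (m * T) ∉ Set.Ioo a0 b}).toReal
      ≤ (P {ω | X ω ≤ a0*(m*T)}).toReal + (P {ω | b*(m*T) ≤ X ω}).toReal := by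
    have h1 := (measure_mono (μ := P) hsub).trans (measure_union_le _ _)
    have h2 := ENNReal.toReal_mono
      (ENNReal.add_ne_top.mpr ⟨measure_ne_top P _, measure_ne_top P _⟩) h1
    rwa [ENNReal.toReal_add (measure_ne_top P _) (measure_ne_top P _)] at h2
  have hfinal : Real.exp (-(ε*(N:ℝ))) ≤ 27/(ε*(N:ℝ))^3 :=
    exp_neg_le_cube _ (mul_pos hε0 hN0)
  calc (P {ω | (∑ j, Yquant N d lam z j * γ j ω) /
      (m * T) ∉ Set.Ioo a0 b}).toReal
      ≤ (P {ω | X ω ≤ a0*(m*T)}).toReal + (P {ω | b*(m*T) ≤ X ω}).toReal := hmeasle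
    _ ≤ Real.exp (-(ε*(N:ℝ))) + Real.exp (-(ε*(N:ℝ))) := add_le_add hlow hup
    _ ≤ 27/(ε*(N:ℝ))^3 + 27/(ε*(N:ℝ))^3 := add_le_add hfinal hfinal
    _ = 2 * 27 / ε^3 * ((N:ℝ)^3)⁻¹ := by
        rw [mul_pow]
        field_simp
        ring
end

section
/- Let A > 0 and let μ and ν be Borel probability measures on ℝ whose supports are contained in [−A, A]. If ∫ log(z − λ) dμ(λ) = ∫ log(z − λ) dν(λ) for every real z > A + 1, then μ = ν. -/
open MeasureTheory
open scoped ENNReal NNReal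

namespace LogPotAux

open Real Set Filter

variable {A : ℝ}

lemma restrict_eq {μ : Measure ℝ} (h : μ (Icc (-A) A)ᶜ = 0) :
    μ.restrict (Icc (-A) A) = μ := by
  rw [Measure.restrict_congr_set (MeasureTheory.ae_eq_univ.2 h), Measure.restrict_univ]

lemma ae_mem {μ : Measure ℝ} (h : μ (Icc (-A) A)ᶜ = 0) :
    ∀ᵐ x ∂μ, x ∈ Icc (-A) A := by
  rw [← restrict_eq h]
  exact ae_restrict_mem measurableSet_Icc

lemma integrable_cont {μ : Measure ℝ} [IsProbabilityMeasure μ] (h : μ (Icc (-A) A)ᶜ = 0)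
    {g : ℝ → ℝ} (hg : ContinuousOn g (Icc (-A) A)) : Integrable g μ := by
  rw [← restrict_eq h]
  exact hg.integrableOn_compact isCompact_Icc

lemma abs_integral_le {μ : Measure ℝ} [IsProbabilityMeasure μ] (h : μ (Icc (-A) A)ᶜ = 0)
    {g : ℝ → ℝ} {C : ℝ} (hC : ∀ x ∈ Icc (-A) A, |g x| ≤ C) :
    |∫ x, g x ∂μ| ≤ C := by
  have hb : ∀ᵐ x ∂μ, ‖g x‖ ≤ C := by
    filter_upwards [ae_mem h] with x hx using hC x hx
  calc |∫ x, g x ∂μ| = ‖∫ x, g x ∂μ‖ := (Real.norm_eq_abs _).symm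
    _ ≤ C * (μ Set.univ).toReal := norm_integral_le_of_norm_le_const hb
    _ = C := by simp

lemma abs_moment_le {μ : Measure ℝ} [IsProbabilityMeasure μ] (hA : 0 < A)
    (h : μ (Icc (-A) A)ᶜ = 0) (n : ℕ) : |∫ x, x ^ n ∂μ| ≤ A ^ n := by
  refine abs_integral_le h fun x hx => ?_
  rw [abs_pow]
  exact pow_le_pow_left₀ (abs_nonneg _) (abs_le.2 ⟨hx.1, hx.2⟩) n

/-- The key expansion of the logarithmic potential into moments, for `z > A + 1`. -/
lemma expansion {μ : Measure ℝ} [IsProbabilityMeasure μ] (hA : 0 < A)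
    (hs : μ (Icc (-A) A)ᶜ = 0) {z : ℝ} (hz : A + 1 < z) :
    HasSum (fun n : ℕ => (∫ l, l ^ (n + 1) ∂μ) / (((n : ℝ) + 1) * z ^ (n + 1)))
      (Real.log z - ∫ l, Real.log (z - l) ∂μ) := by
  have hz0 : (0 : ℝ) < z := by linarith
  have hAz : A < z := by linarith
  set f : ℕ → ℝ → ℝ := fun n l => l ^ (n + 1) / (((n : ℝ) + 1) * z ^ (n + 1)) with hf
  have hr0 : (0 : ℝ) ≤ A / z := by positivity
  have hr1 : A / z < 1 := (div_lt_one hz0).2 hAz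
  have hsumgeo : Summable (fun n : ℕ => (A / z) ^ (n + 1)) :=
    (summable_nat_add_iff 1).2 (summable_geometric_of_lt_one hr0 hr1)
  have hbound : ∀ (n : ℕ), ∀ l ∈ Icc (-A) A, |f n l| ≤ (A / z) ^ (n + 1) := by
    intro n l hl
    have hl' : |l| ≤ A := abs_le.2 ⟨hl.1, hl.2⟩
    have hden : (0 : ℝ) < ((n : ℝ) + 1) * z ^ (n + 1) :=
      mul_pos (by positivity) (pow_pos hz0 _)
    have h1 : |f n l| = |l| ^ (n + 1) / (((n : ℝ) + 1) * z ^ (n + 1)) := by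
      rw [hf, abs_div, abs_pow, abs_of_pos hden]
    rw [h1, div_pow]
    have hn0 : (0 : ℝ) ≤ (n : ℝ) := Nat.cast_nonneg n
    have h2 : |l| ^ (n + 1) / (((n : ℝ) + 1) * z ^ (n + 1))
        ≤ A ^ (n + 1) / (1 * z ^ (n + 1)) := by
      gcongr <;> first | positivity | linarith | exact hl'
    simpa using h2
  -- integrability facts
  have hfc : ∀ n : ℕ, Continuous (f n) := fun n =>
    (continuous_pow (n + 1)).div_const _
  have hfint : ∀ n : ℕ, Integrable (f n) μ := fun n =>
    integrable_cont hs (hfc n).continuousOn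
  have hlogc : ContinuousOn (fun l : ℝ => Real.log (z - l)) (Icc (-A) A) := by
    apply ContinuousOn.log
    · exact (continuous_const.sub continuous_id).continuousOn
    · intro l hl
      have : l ≤ A := hl.2
      have : 0 < z - l := by linarith
      exact ne_of_gt this
  have hlogint : Integrable (fun l : ℝ => Real.log (z - l)) μ := integrable_cont hs hlogc
  -- pointwise expansion
  have hpt : ∀ l ∈ Icc (-A) A,
      HasSum (fun n : ℕ => f n l) (Real.log z - Real.log (z - l)) := by
    intro l hl
    have hl' : |l| ≤ A := abs_le.2 ⟨hl.1, hl.2⟩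
    have habs : |l / z| < 1 := by
      rw [abs_div, abs_of_pos hz0]
      exact (div_lt_one hz0).2 (lt_of_le_of_lt hl' hAz)
    have H := Real.hasSum_pow_div_log_of_abs_lt_one habs
    have hzl : 0 < z - l := by
      have : l ≤ A := hl.2
      linarith
    have hval : -Real.log (1 - l / z) = Real.log z - Real.log (z - l) := by
      have h1 : 1 - l / z = (z - l) / z := by field_simp
      rw [h1, Real.log_div (ne_of_gt hzl) (ne_of_gt hz0)]
      ring
    have hfun : (fun n : ℕ => (l / z) ^ (n + 1) / ((n : ℝ) + 1)) = fun n => f n l := by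
      funext n
      rw [hf, div_pow, div_div, mul_comm]
    rw [hfun, hval] at H
    exact H
  -- swap sum and integral
  have hmeas : ∀ n : ℕ, AEStronglyMeasurable (f n) μ := fun n =>
    (hfc n).aestronglyMeasurable
  have hlin : (∑' n : ℕ, ∫⁻ l, ‖f n l‖₊ ∂μ) ≠ ⊤ := by
    have hb : ∀ n : ℕ, ∫⁻ l, ‖f n l‖₊ ∂μ ≤ ENNReal.ofReal ((A / z) ^ (n + 1)) := by
      intro n
      calc ∫⁻ l, (‖f n l‖₊ : ℝ≥0∞) ∂μ
          ≤ ∫⁻ _, ENNReal.ofReal ((A / z) ^ (n + 1)) ∂μ := by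
            apply lintegral_mono_ae
            filter_upwards [ae_mem hs] with l hl
            rw [← enorm_eq_nnnorm, ← ofReal_norm]
            exact ENNReal.ofReal_le_ofReal (hbound n l hl)
        _ = ENNReal.ofReal ((A / z) ^ (n + 1)) := by simp
    refine ne_top_of_le_ne_top ?_ (ENNReal.tsum_le_tsum hb)
    rw [← ENNReal.ofReal_tsum_of_nonneg (fun n => by positivity) hsumgeo]
    exact ENNReal.ofReal_ne_top
  have key : ∫ l, (Real.log z - Real.log (z - l)) ∂μ = ∑' n : ℕ, ∫ l, f n l ∂μ := by
    rw [← integral_tsum hmeas hlin]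
    apply integral_congr_ae
    filter_upwards [ae_mem hs] with l hl
    exact ((hpt l hl).tsum_eq).symm
  have hLHS : ∫ l, (Real.log z - Real.log (z - l)) ∂μ
      = Real.log z - ∫ l, Real.log (z - l) ∂μ := by
    rw [integral_sub (integrable_const _) hlogint]
    simp
  -- summability of the integrals
  have hSsum : Summable (fun n : ℕ => ∫ l, f n l ∂μ) := by
    apply Summable.of_norm_bounded hsumgeo
    intro n
    rw [Real.norm_eq_abs]
    exact abs_integral_le hs (hbound n)
  have hfinal : ∑' n : ℕ, ∫ l, f n l ∂μ = Real.log z - ∫ l, Real.log (z - l) ∂μ := by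
    rw [← key, hLHS]
  have := hSsum.hasSum
  rw [hfinal] at this
  have hform : (fun n : ℕ => ∫ l, f n l ∂μ)
      = fun n : ℕ => (∫ l, l ^ (n + 1) ∂μ) / (((n : ℝ) + 1) * z ^ (n + 1)) := by
    funext n
    rw [hf]
    exact integral_div _ _
  rwa [hform] at this

end LogPotAux

/-- Let `A > 0` and let `μ` and `ν` be Borel probability measures on `ℝ`
whose supports are contained in `[-A, A]`. If `∫ log (z - λ) dμ(λ) = ∫ log (z - λ) dν(λ)`
for every real `z > A + 1`, then `μ = ν`. -/
theorem logPotential_eq_implies_measure_eq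
    (A : ℝ) (hA : 0 < A) (μ ν : Measure ℝ)
    [IsProbabilityMeasure μ] [IsProbabilityMeasure ν]
    (hμsupp : μ (Set.Icc (-A) A)ᶜ = 0) (hνsupp : ν (Set.Icc (-A) A)ᶜ = 0)
    (h : ∀ z : ℝ, A + 1 < z →
      ∫ l, Real.log (z - l) ∂μ = ∫ l, Real.log (z - l) ∂ν) :
    μ = ν := by
  classical
  -- the sequence of moment differences
  set d : ℕ → ℝ := fun n => (∫ l, l ^ n ∂μ) - ∫ l, l ^ n ∂ν with hd
  set c : ℕ → ℝ := fun n => d n / n with hc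
  have hc0 : c 0 = 0 := by simp [hc]
  have hdbound : ∀ n, |d n| ≤ 2 * A ^ n := by
    intro n
    have h1 := LogPotAux.abs_moment_le hA hμsupp n
    have h2 := LogPotAux.abs_moment_le hA hνsupp n
    calc |d n| ≤ |∫ l, l ^ n ∂μ| + |∫ l, l ^ n ∂ν| := abs_sub _ _
      _ ≤ 2 * A ^ n := by linarith
  have hcbound : ∀ n, |c n| ≤ 2 * A ^ n := by
    intro n
    match n with
    | 0 => rw [hc0]; simp
    | Nat.succ m =>
      have heq : |c (m + 1)| = |d (m + 1)| / ((m : ℝ) + 1) := by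
        simp only [hc]
        push_cast
        rw [abs_div, abs_of_pos (by positivity : (0:ℝ) < (m:ℝ) + 1)]
      rw [heq]
      have hm1 : (1 : ℝ) ≤ (m : ℝ) + 1 := by
        have := Nat.cast_nonneg (α := ℝ) m; linarith
      calc |d (m + 1)| / ((m : ℝ) + 1) ≤ |d (m + 1)| / 1 := by
            gcongr
        _ = |d (m + 1)| := div_one _
        _ ≤ 2 * A ^ (m + 1) := hdbound _
  -- the formal power series with coefficients `c`
  set p := FormalMultilinearSeries.ofScalars ℝ c with hp
  have hnorm : ∀ n, ‖p n‖ = |c n| := fun n => by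
    rw [hp, FormalMultilinearSeries.ofScalars_norm]
    exact Real.norm_eq_abs _
  have hrad : ((Real.toNNReal A⁻¹ : ℝ≥0) : ℝ≥0∞) ≤ p.radius := by
    apply FormalMultilinearSeries.le_radius_of_bound _ 2
    intro n
    rw [hnorm, Real.coe_toNNReal _ (by positivity)]
    calc |c n| * A⁻¹ ^ n ≤ 2 * A ^ n * A⁻¹ ^ n :=
          mul_le_mul_of_nonneg_right (hcbound n) (by positivity)
      _ = 2 := by
          rw [mul_assoc, ← mul_pow, mul_inv_cancel₀ hA.ne', one_pow, mul_one]
  have hrpos : (0 : ℝ≥0∞) < p.radius := by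
    refine lt_of_lt_of_le ?_ hrad
    rw [ENNReal.coe_pos]
    exact Real.toNNReal_pos.2 (by positivity)
  have hball := p.hasFPowerSeriesOnBall hrpos
  -- the sum of the power series vanishes on `(0, (A+1)⁻¹)`
  have hsum0 : ∀ t ∈ Set.Ioo (0 : ℝ) (A + 1)⁻¹, p.sum t = 0 := by
    intro t ht
    have htpos : 0 < t := ht.1
    have hzgt : A + 1 < t⁻¹ := by
      have := inv_strictAnti₀ ht.1 ht.2
      rwa [inv_inv] at this
    have Hμ := LogPotAux.expansion hA hμsupp hzgt
    have Hν := LogPotAux.expansion hA hνsupp hzgt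
    have Hd := Hμ.sub Hν
    rw [h t⁻¹ hzgt, sub_self] at Hd
    have Hq : HasSum (fun n : ℕ => c (n + 1) * t ^ (n + 1)) 0 := by
      have hfun : (fun n : ℕ => c (n + 1) * t ^ (n + 1))
          = fun n : ℕ => (∫ l, l ^ (n + 1) ∂μ) / (((n : ℝ) + 1) * (t⁻¹) ^ (n + 1))
            - (∫ l, l ^ (n + 1) ∂ν) / (((n : ℝ) + 1) * (t⁻¹) ^ (n + 1)) := by
        funext n
        rw [hc, hd]
        have htne : t ≠ 0 := ne_of_gt htpos
        rw [div_sub_div_same]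
        field_simp
        rw [one_div, inv_pow]; push_cast; field_simp
      rw [hfun]
      exact Hd
    have Hq0 : HasSum (fun n : ℕ => c n * t ^ n) (0 + ∑ i ∈ Finset.range 1, c i * t ^ i) :=
      (hasSum_nat_add_iff (f := fun n => c n * t ^ n) 1).1 Hq
    have hval : (0 : ℝ) + ∑ i ∈ Finset.range 1, c i * t ^ i = 0 := by
      simp [hc0]
    rw [hval] at Hq0
    have hps : p.sum t = ∑' n : ℕ, c n * t ^ n := by
      rw [hp]
      unfold FormalMultilinearSeries.sum
      apply tsum_congr
      intro n
      rw [FormalMultilinearSeries.ofScalars_apply_eq]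
      simp [smul_eq_mul]
    rw [hps, Hq0.tsum_eq]
  -- the power series sum is analytic on the ball of radius `A⁻¹`
  set U := Metric.ball (0 : ℝ) A⁻¹ with hU
  have hAn : AnalyticOnNhd ℝ p.sum U := by
    intro w hw
    apply hball.analyticAt_of_mem
    rw [EMetric.mem_ball]
    have h1 : edist w 0 = ENNReal.ofReal |w| := by
      rw [edist_dist, Real.dist_eq, sub_zero]
    rw [h1]
    refine lt_of_lt_of_le ?_ hrad
    have hw' : |w| < A⁻¹ := by
      rw [Metric.mem_ball, Real.dist_eq, sub_zero] at hw
      exact hw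
    have : ((Real.toNNReal A⁻¹ : ℝ≥0) : ℝ≥0∞) = ENNReal.ofReal A⁻¹ := rfl
    rw [this]
    exact (ENNReal.ofReal_lt_ofReal_iff (by positivity)).2 hw'
  have hpre : IsPreconnected U := (convex_ball _ _).isPreconnected
  have hz₀mem : (A + 2)⁻¹ ∈ U := by
    rw [hU, Metric.mem_ball, Real.dist_eq, sub_zero, abs_of_pos (by positivity)]
    exact inv_strictAnti₀ hA (by linarith)
  have hev : p.sum =ᶠ[nhds ((A + 2)⁻¹)] 0 := by
    have hopen : Set.Ioo (0 : ℝ) (A + 1)⁻¹ ∈ nhds ((A + 2)⁻¹) := by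
      apply isOpen_Ioo.mem_nhds
      constructor
      · positivity
      · exact inv_strictAnti₀ (by positivity) (by linarith)
    filter_upwards [hopen] with t ht using hsum0 t ht
  have hzero : Set.EqOn p.sum 0 U :=
    hAn.eqOn_zero_of_preconnected_of_eventuallyEq_zero hpre hz₀mem hev
  have h0mem : (0 : ℝ) ∈ U := Metric.mem_ball_self (by positivity)
  have hev0 : p.sum =ᶠ[nhds (0 : ℝ)] 0 := by
    filter_upwards [Metric.isOpen_ball.mem_nhds h0mem] with t ht using hzero ht
  have hFP : HasFPowerSeriesAt (0 : ℝ → ℝ) p 0 :=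
    hball.hasFPowerSeriesAt.congr hev0
  have hp0 : p = 0 := hFP.eq_zero
  have hcz : ∀ n, c n = 0 := by
    intro n
    have := congr_fun hp0 n
    rw [hp] at this
    exact (FormalMultilinearSeries.ofScalars_eq_zero ℝ n).1 this
  -- all moments agree
  have hmom : ∀ n : ℕ, ∫ l, l ^ n ∂μ = ∫ l, l ^ n ∂ν := by
    intro n
    match n with
    | 0 => simp
    | Nat.succ m =>
      have hcm := hcz (m + 1)
      simp only [hc] at hcm
      have hd0 : d (m + 1) = 0 := by
        field_simp at hcm
        simpa using hcm
      simp only [hd] at hd0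
      exact sub_eq_zero.1 hd0
  -- integrals of polynomials agree
  have hpoly : ∀ q : Polynomial ℝ, ∫ l, q.eval l ∂μ = ∫ l, q.eval l ∂ν := by
    intro q
    have hμint : ∀ i : ℕ, Integrable (fun l : ℝ => q.coeff i * l ^ i) μ := fun i =>
      (LogPotAux.integrable_cont hμsupp (continuous_pow i).continuousOn).const_mul _
    have hνint : ∀ i : ℕ, Integrable (fun l : ℝ => q.coeff i * l ^ i) ν := fun i =>
      (LogPotAux.integrable_cont hνsupp (continuous_pow i).continuousOn).const_mul _
    have heval : ∀ l : ℝ, q.eval l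
        = ∑ i ∈ Finset.range (q.natDegree + 1), q.coeff i * l ^ i := fun l =>
      q.eval_eq_sum_range l
    calc ∫ l, q.eval l ∂μ
        = ∫ l, ∑ i ∈ Finset.range (q.natDegree + 1), q.coeff i * l ^ i ∂μ := by
          simp_rw [heval]
      _ = ∑ i ∈ Finset.range (q.natDegree + 1), ∫ l, q.coeff i * l ^ i ∂μ :=
          integral_finset_sum _ fun i _ => hμint i
      _ = ∑ i ∈ Finset.range (q.natDegree + 1), q.coeff i * ∫ l, l ^ i ∂μ := by
          simp_rw [integral_const_mul]
      _ = ∑ i ∈ Finset.range (q.natDegree + 1), q.coeff i * ∫ l, l ^ i ∂ν := by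
          simp_rw [hmom]
      _ = ∑ i ∈ Finset.range (q.natDegree + 1), ∫ l, q.coeff i * l ^ i ∂ν := by
          simp_rw [integral_const_mul]
      _ = ∫ l, ∑ i ∈ Finset.range (q.natDegree + 1), q.coeff i * l ^ i ∂ν :=
          (integral_finset_sum _ fun i _ => hνint i).symm
      _ = ∫ l, q.eval l ∂ν := by simp_rw [heval]
  -- integrals of continuous functions agree
  have hcont : ∀ g : ℝ → ℝ, Continuous g → ∫ l, g l ∂μ = ∫ l, g l ∂ν := by
    intro g hg
    have hintμ : Integrable g μ := LogPotAux.integrable_cont hμsupp hg.continuousOn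
    have hintν : Integrable g ν := LogPotAux.integrable_cont hνsupp hg.continuousOn
    by_contra hne
    set ε := |(∫ l, g l ∂μ) - ∫ l, g l ∂ν| with hε
    have hεpos : 0 < ε := by
      rw [hε]
      exact abs_pos.2 (sub_ne_zero.2 hne)
    obtain ⟨q, hq⟩ := exists_polynomial_near_of_continuousOn (-A) A g hg.continuousOn
      (ε / 3) (by positivity)
    have hqintμ : Integrable (fun l : ℝ => q.eval l) μ :=
      LogPotAux.integrable_cont hμsupp q.continuous_aeval.continuousOn
    have hqintν : Integrable (fun l : ℝ => q.eval l) ν :=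
      LogPotAux.integrable_cont hνsupp q.continuous_aeval.continuousOn
    have h1 : |(∫ l, g l ∂μ) - ∫ l, q.eval l ∂μ| ≤ ε / 3 := by
      rw [← integral_sub hintμ hqintμ]
      refine LogPotAux.abs_integral_le hμsupp fun x hx => ?_
      have := hq x hx
      rw [abs_sub_comm] at this
      exact this.le
    have h2 : |(∫ l, g l ∂ν) - ∫ l, q.eval l ∂ν| ≤ ε / 3 := by
      rw [← integral_sub hintν hqintν]
      refine LogPotAux.abs_integral_le hνsupp fun x hx => ?_
      have := hq x hx
      rw [abs_sub_comm] at this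
      exact this.le
    have h3 : (∫ l, q.eval l ∂μ) = ∫ l, q.eval l ∂ν := hpoly q
    have : ε ≤ 2 * (ε / 3) := by
      calc ε = |((∫ l, g l ∂μ) - ∫ l, q.eval l ∂μ)
          + ((∫ l, q.eval l ∂ν) - ∫ l, g l ∂ν)| := by
            rw [hε, h3]; ring_nf
      _ ≤ |(∫ l, g l ∂μ) - ∫ l, q.eval l ∂μ|
          + |(∫ l, q.eval l ∂ν) - ∫ l, g l ∂ν| := abs_add_le _ _
      _ ≤ ε / 3 + ε / 3 := by
            rw [abs_sub_comm (∫ l, q.eval l ∂ν)]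
            exact add_le_add h1 h2
      _ = 2 * (ε / 3) := by ring
    linarith
  -- conclude equality of the measures
  apply ext_of_forall_lintegral_eq_of_IsFiniteMeasure
  intro f
  have hfc : Continuous fun x : ℝ => ((f x : ℝ≥0) : ℝ) :=
    NNReal.continuous_coe.comp f.continuous
  have hintμ : Integrable (fun x : ℝ => ((f x : ℝ≥0) : ℝ)) μ :=
    LogPotAux.integrable_cont hμsupp hfc.continuousOn
  have hintν : Integrable (fun x : ℝ => ((f x : ℝ≥0) : ℝ)) ν :=
    LogPotAux.integrable_cont hνsupp hfc.continuousOn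
  rw [lintegral_coe_eq_integral _ hintμ, lintegral_coe_eq_integral _ hintν,
    hcont _ hfc]
end

section
/- Let A > 0, let (μ_n)_{n ≥ 1} be a sequence of Borel probability measures on ℝ all supported in [−A, A], and let μ be a Borel probability measure supported in [−A, A]. If for every real z > A + 1 one has ∫ log(z − λ) dμ_n(λ) → ∫ log(z − λ) dμ(λ) as n → ∞, then μ_n converges weakly to μ. -/
open MeasureTheory Filter

section Aux

variable {A : ℝ}

private lemma lp_ae_mem {ν : Measure ℝ} (hν : ν (Set.Icc (-A) A)ᶜ = 0) :
    ∀ᵐ x ∂ν, x ∈ Set.Icc (-A) A := by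
  rw [MeasureTheory.ae_iff]
  exact hν

private lemma lp_integrable {ν : Measure ℝ} [IsProbabilityMeasure ν]
    (hν : ν (Set.Icc (-A) A)ᶜ = 0) {g : ℝ → ℝ} (hg : AEStronglyMeasurable g ν) {C : ℝ}
    (hC : ∀ x ∈ Set.Icc (-A) A, |g x| ≤ C) : Integrable g ν :=
  Integrable.mono' (integrable_const C) hg
    ((lp_ae_mem hν).mono fun x hx => by simpa using hC x hx)

private lemma lp_abs_integral_le {ν : Measure ℝ} [IsProbabilityMeasure ν]
    (hν : ν (Set.Icc (-A) A)ᶜ = 0) {g : ℝ → ℝ} {C : ℝ}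
    (hC : ∀ x ∈ Set.Icc (-A) A, |g x| ≤ C) : |∫ x, g x ∂ν| ≤ C := by
  have := MeasureTheory.norm_integral_le_of_norm_le_const (μ := ν) (f := g) (C := C)
    ((lp_ae_mem hν).mono fun x hx => by simpa using hC x hx)
  simpa using this

private lemma lp_log_le {a b : ℝ} (ha : 0 < a) (hab : a ≤ b) :
    Real.log b - Real.log a ≤ (b - a) / a := by
  have hb : 0 < b := lt_of_lt_of_le ha hab
  have h1 : Real.log (b / a) ≤ b / a - 1 := Real.log_le_sub_one_of_pos (div_pos hb ha)
  rw [Real.log_div hb.ne' ha.ne'] at h1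
  have h2 : b / a - 1 = (b - a) / a := by field_simp
  linarith

private lemma lp_le_log {a b : ℝ} (ha : 0 < a) (hab : a ≤ b) :
    (b - a) / b ≤ Real.log b - Real.log a := by
  have hb : 0 < b := lt_of_lt_of_le ha hab
  have h1 : Real.log (a / b) ≤ a / b - 1 := Real.log_le_sub_one_of_pos (div_pos ha hb)
  rw [Real.log_div ha.ne' hb.ne'] at h1
  have h2 : a / b - 1 = -((b - a) / b) := by field_simp; ring
  linarith

private lemma lp_meas_log (z : ℝ) : Measurable fun l : ℝ => Real.log (z - l) :=
  Real.measurable_log.comp (measurable_const.sub measurable_id)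

private lemma lp_meas_res (z : ℝ) (k : ℕ) : Measurable fun l : ℝ => l ^ k * (z - l)⁻¹ :=
  (measurable_id.pow_const k).mul (measurable_const.sub measurable_id).inv

end Aux

private lemma lp_inv_diff {u v : ℝ} (hu : 1 ≤ u) (hv : 1 ≤ v) (huv : u ≤ v) :
    u⁻¹ - v⁻¹ ≤ v - u := by
  have hu0 : (0:ℝ) < u := by linarith
  have hv0 : (0:ℝ) < v := by linarith
  have h1 : u⁻¹ ≤ 1 := inv_le_one_of_one_le₀ hu
  have h2 : v⁻¹ ≤ 1 := inv_le_one_of_one_le₀ hv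
  have h3 : (0:ℝ) < u⁻¹ := inv_pos.2 hu0
  have h4 : (0:ℝ) < v⁻¹ := inv_pos.2 hv0
  have he : u⁻¹ - v⁻¹ = (v - u) * (u⁻¹ * v⁻¹) := by
    field_simp
  rw [he]
  nlinarith [mul_le_one₀ h1 h4.le h2]

private lemma lp_log_ineq {x δ : ℝ} (hx : 0 < x - δ) (hδ : 0 ≤ δ) :
    δ * x⁻¹ ≤ Real.log x - Real.log (x - δ) ∧
      Real.log x - Real.log (x - δ) ≤ δ * (x - δ)⁻¹ := by
  have hx0 : (0:ℝ) < x := by linarith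
  constructor
  · have h := lp_le_log (a := x - δ) (b := x) hx (by linarith)
    rw [show x - (x - δ) = δ by ring, div_eq_mul_inv] at h
    exact h
  · have h := lp_log_le (a := x - δ) (b := x) hx (by linarith)
    rw [show x - (x - δ) = δ by ring, div_eq_mul_inv] at h
    exact h

private lemma lp_int_log {A w : ℝ} (hA : 0 < A) (hw : A + 1 < w) {ν : Measure ℝ}
    [IsProbabilityMeasure ν] (hν : ν (Set.Icc (-A) A)ᶜ = 0) :
    Integrable (fun l => Real.log (w - l)) ν := by
  apply lp_integrable hν (lp_meas_log w).aestronglyMeasurable (C := Real.log (w + A))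
  intro x hx
  obtain ⟨h1, h2⟩ := hx
  have hwx : 1 ≤ w - x := by linarith
  rw [abs_of_nonneg (Real.log_nonneg hwx)]
  exact Real.log_le_log (by linarith) (by linarith)

private lemma lp_res_bound {A z : ℝ} (hA : 0 < A) (hz : A + 1 < z) (k : ℕ) {x : ℝ}
    (hx : x ∈ Set.Icc (-A) A) : |x ^ k * (z - x)⁻¹| ≤ A ^ k * (z - A)⁻¹ := by
  obtain ⟨h1, h2⟩ := hx
  have h3 : (0:ℝ) < z - A := by linarith
  have h4 : (0:ℝ) < z - x := by linarith
  rw [abs_mul, abs_pow, abs_of_nonneg (inv_nonneg.2 h4.le)]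
  have h5 : |x| ^ k ≤ A ^ k := pow_le_pow_left₀ (abs_nonneg x) (abs_le.2 ⟨h1, h2⟩) k
  have h6 : (z - x)⁻¹ ≤ (z - A)⁻¹ := by
    apply inv_anti₀ h3; linarith
  exact mul_le_mul h5 h6 (inv_nonneg.2 h4.le) (by positivity)

private lemma lp_int_res {A z : ℝ} (hA : 0 < A) (hz : A + 1 < z) (k : ℕ) {ν : Measure ℝ}
    [IsProbabilityMeasure ν] (hν : ν (Set.Icc (-A) A)ᶜ = 0) :
    Integrable (fun l => l ^ k * (z - l)⁻¹) ν :=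
  lp_integrable hν (lp_meas_res z k).aestronglyMeasurable
    (C := A ^ k * (z - A)⁻¹) fun x hx => lp_res_bound hA hz k hx

private lemma lp_key {A z δ : ℝ} (hA : 0 < A) (hz : A + 2 < z) (hδ0 : 0 < δ) (hδ : δ ≤ 1/2)
    {ν : Measure ℝ} [IsProbabilityMeasure ν] (hν : ν (Set.Icc (-A) A)ᶜ = 0) :
    (δ * ∫ l, (z - l)⁻¹ ∂ν ≤ (∫ l, Real.log (z - l) ∂ν) - ∫ l, Real.log (z - δ - l) ∂ν) ∧
    ((∫ l, Real.log (z - l) ∂ν) - (∫ l, Real.log (z - δ - l) ∂ν)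
        ≤ δ * (∫ l, (z - l)⁻¹ ∂ν) + δ * δ) ∧
    ((∫ l, Real.log (z + δ - l) ∂ν) - (∫ l, Real.log (z - l) ∂ν)
        ≤ δ * ∫ l, (z - l)⁻¹ ∂ν) ∧
    (δ * (∫ l, (z - l)⁻¹ ∂ν) - δ * δ
        ≤ (∫ l, Real.log (z + δ - l) ∂ν) - ∫ l, Real.log (z - l) ∂ν) := by
  have hK := lp_ae_mem hν
  have Ilog1 : Integrable (fun l => Real.log (z - l)) ν := lp_int_log hA (by linarith) hν
  have Ilog2 : Integrable (fun l => Real.log (z - δ - l)) ν := by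
    have := lp_int_log (w := z - δ) hA (by linarith) hν
    simpa [sub_right_comm] using this
  have Ilog3 : Integrable (fun l => Real.log (z + δ - l)) ν :=
    lp_int_log (w := z + δ) hA (by linarith) hν
  have Ires : Integrable (fun l => (z - l)⁻¹) ν := by
    have := lp_int_res hA (by linarith : A + 1 < z) 0 hν
    simpa using this
  -- pointwise facts
  have hpt : ∀ x ∈ Set.Icc (-A) A,
      (δ * (z - x)⁻¹ ≤ Real.log (z - x) - Real.log (z - δ - x)) ∧
      (Real.log (z - x) - Real.log (z - δ - x) ≤ δ * (z - x)⁻¹ + δ * δ) ∧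
      (Real.log (z + δ - x) - Real.log (z - x) ≤ δ * (z - x)⁻¹) ∧
      (δ * (z - x)⁻¹ - δ * δ ≤ Real.log (z + δ - x) - Real.log (z - x)) := by
    intro x hx
    obtain ⟨h1, h2⟩ := hx
    have e1 : (z - x) - δ = z - δ - x := by ring
    have e2 : (z + δ - x) - δ = z - x := by ring
    have hb1 : (1:ℝ) ≤ z - δ - x := by linarith
    have hb2 : (1:ℝ) ≤ z - x := by linarith
    have hb3 : (1:ℝ) ≤ z + δ - x := by linarith
    have K1 := lp_log_ineq (x := z - x) (δ := δ) (by linarith) hδ0.le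
    rw [e1] at K1
    have K2 := lp_log_ineq (x := z + δ - x) (δ := δ) (by linarith) hδ0.le
    rw [e2] at K2
    have D1 : (z - δ - x)⁻¹ - (z - x)⁻¹ ≤ δ := by
      have := lp_inv_diff hb1 hb2 (by linarith)
      linarith
    have D2 : (z - x)⁻¹ - (z + δ - x)⁻¹ ≤ δ := by
      have := lp_inv_diff hb2 hb3 (by linarith)
      linarith
    refine ⟨K1.1, ?_, K2.2, ?_⟩
    · nlinarith [K1.2]
    · nlinarith [K2.1]
  refine ⟨?_, ?_, ?_, ?_⟩
  · rw [← integral_const_mul, ← integral_sub Ilog1 Ilog2]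
    exact integral_mono_ae (Ires.const_mul δ) (Ilog1.sub Ilog2)
      (hK.mono fun x hx => (hpt x hx).1)
  · rw [← integral_sub Ilog1 Ilog2]
    have : (∫ l, Real.log (z - l) - Real.log (z - δ - l) ∂ν)
        ≤ ∫ l, δ * (z - l)⁻¹ + δ * δ ∂ν :=
      integral_mono_ae (Ilog1.sub Ilog2) ((Ires.const_mul δ).add (integrable_const _))
        (hK.mono fun x hx => (hpt x hx).2.1)
    rwa [integral_add (Ires.const_mul δ) (integrable_const _),
      integral_const_mul, integral_const, probReal_univ,
      one_smul] at this
  · rw [← integral_const_mul, ← integral_sub Ilog3 Ilog1]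
    exact integral_mono_ae (Ilog3.sub Ilog1) (Ires.const_mul δ)
      (hK.mono fun x hx => (hpt x hx).2.2.1)
  · rw [← integral_sub Ilog3 Ilog1]
    have : (∫ l, δ * (z - l)⁻¹ - δ * δ ∂ν)
        ≤ ∫ l, Real.log (z + δ - l) - Real.log (z - l) ∂ν :=
      integral_mono_ae ((Ires.const_mul δ).sub (integrable_const _)) (Ilog3.sub Ilog1)
        (hK.mono fun x hx => (hpt x hx).2.2.2)
    rwa [integral_sub (Ires.const_mul δ) (integrable_const _),
      integral_const_mul, integral_const, probReal_univ,
      one_smul] at this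

private lemma lp_step1 {A : ℝ} (hA : 0 < A) {μs : ℕ → Measure ℝ} {μ : Measure ℝ}
    [∀ n, IsProbabilityMeasure (μs n)] [IsProbabilityMeasure μ]
    (hsupp : ∀ n, μs n (Set.Icc (-A) A)ᶜ = 0) (hsupp' : μ (Set.Icc (-A) A)ᶜ = 0)
    (h : ∀ z : ℝ, A + 1 < z →
      Tendsto (fun n => ∫ l, Real.log (z - l) ∂(μs n)) atTop
        (nhds (∫ l, Real.log (z - l) ∂μ)))
    {z : ℝ} (hz : A + 2 < z) :
    Tendsto (fun n => ∫ l, (z - l)⁻¹ ∂(μs n)) atTop (nhds (∫ l, (z - l)⁻¹ ∂μ)) := by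
  rw [Metric.tendsto_atTop]
  intro ε hε
  set δ := min (1/2) (ε/3) with hδdef
  have hδ0 : 0 < δ := lt_min (by norm_num) (by linarith)
  have hδh : δ ≤ 1/2 := min_le_left _ _
  have hδε : δ ≤ ε/3 := min_le_right _ _
  have hz1 : A + 1 < z := by linarith
  have hz2 : A + 1 < z - δ := by linarith
  obtain ⟨N1, hN1⟩ := Metric.tendsto_atTop.mp (h z hz1) (δ*ε/6) (by positivity)
  obtain ⟨N2, hN2⟩ := Metric.tendsto_atTop.mp (h (z - δ) hz2) (δ*ε/6) (by positivity)
  refine ⟨max N1 N2, fun n hn => ?_⟩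
  obtain ⟨k1n, k2n, -, -⟩ := lp_key hA hz hδ0 hδh (hsupp n)
  obtain ⟨k1, k2, -, -⟩ := lp_key hA hz hδ0 hδh hsupp'
  have a1 := hN1 n (le_trans (le_max_left _ _) hn)
  have a2 := hN2 n (le_trans (le_max_right _ _) hn)
  rw [Real.dist_eq, abs_lt] at a1 a2
  rw [Real.dist_eq]
  have hδ2 : δ * δ ≤ δ * (ε/3) := by nlinarith
  set Rn := ∫ l, (z - l)⁻¹ ∂(μs n)
  set R := ∫ l, (z - l)⁻¹ ∂μ
  have e1 : δ * Rn - δ * R ≤ δ * δ + δ * (ε/3) := by linarith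
  have e2 : δ * R - δ * Rn ≤ δ * δ + δ * (ε/3) := by linarith
  rw [abs_lt]
  constructor <;> nlinarith

private lemma lp_int_pow {A : ℝ} (hA : 0 < A) (k : ℕ) {ν : Measure ℝ}
    [IsProbabilityMeasure ν] (hν : ν (Set.Icc (-A) A)ᶜ = 0) :
    Integrable (fun l : ℝ => l ^ k) ν := by
  apply lp_integrable hν (measurable_id.pow_const k).aestronglyMeasurable (C := A ^ k)
  intro x hx
  obtain ⟨h1, h2⟩ := hx
  rw [abs_pow]
  exact pow_le_pow_left₀ (abs_nonneg x) (abs_le.2 ⟨h1, h2⟩) k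

private lemma lp_shift {A z : ℝ} (hA : 0 < A) (hz : A + 1 < z) (k : ℕ) {ν : Measure ℝ}
    [IsProbabilityMeasure ν] (hν : ν (Set.Icc (-A) A)ᶜ = 0) :
    ∫ l, l ^ (k+1) * (z - l)⁻¹ ∂ν
      = z * (∫ l, l ^ k * (z - l)⁻¹ ∂ν) - ∫ l, l ^ k ∂ν := by
  have h1 : ∫ l, l ^ (k+1) * (z - l)⁻¹ ∂ν
      = ∫ l, z * (l ^ k * (z - l)⁻¹) - l ^ k ∂ν := by
    apply integral_congr_ae
    refine (lp_ae_mem hν).mono fun x hx => ?_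
    obtain ⟨hx1, hx2⟩ := hx
    have hzx : z - x ≠ 0 := by intro hc; nlinarith [hc]
    show x ^ (k + 1) * (z - x)⁻¹ = z * (x ^ k * (z - x)⁻¹) - x ^ k
    field_simp
    ring
  rw [h1, integral_sub ((lp_int_res hA hz k hν).const_mul z) (lp_int_pow hA k hν),
    integral_const_mul]

private lemma lp_mom {A : ℝ} (hA : 0 < A) {μs : ℕ → Measure ℝ} {μ : Measure ℝ}
    [∀ n, IsProbabilityMeasure (μs n)] [IsProbabilityMeasure μ]
    (hsupp : ∀ n, μs n (Set.Icc (-A) A)ᶜ = 0) (hsupp' : μ (Set.Icc (-A) A)ᶜ = 0)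
    (h : ∀ z : ℝ, A + 1 < z →
      Tendsto (fun n => ∫ l, Real.log (z - l) ∂(μs n)) atTop
        (nhds (∫ l, Real.log (z - l) ∂μ))) :
    ∀ k : ℕ, Tendsto (fun n => ∫ l, l ^ k ∂(μs n)) atTop (nhds (∫ l, l ^ k ∂μ)) := by
  -- from resolvent convergence at level k, deduce moment convergence at level k
  have momstep : ∀ k : ℕ, (∀ z : ℝ, A + 2 < z →
      Tendsto (fun n => ∫ l, l ^ k * (z - l)⁻¹ ∂(μs n)) atTop
        (nhds (∫ l, l ^ k * (z - l)⁻¹ ∂μ))) →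
      Tendsto (fun n => ∫ l, l ^ k ∂(μs n)) atTop (nhds (∫ l, l ^ k ∂μ)) := by
    intro k hres
    rw [Metric.tendsto_atTop]
    intro ε hε
    set P := A ^ (k+1) with hP
    have hP0 : 0 < P := by positivity
    set z := A + 3 + 3 * P / ε with hzdef
    have hz : A + 2 < z := by
      have : 0 < 3 * P / ε := by positivity
      simp only [hzdef]; linarith
    have hz1 : A + 1 < z := by linarith
    -- the error term bound
    have hB : P * (z - A)⁻¹ ≤ ε / 3 := by
      have hzA : (0:ℝ) < z - A := by linarith
      rw [← div_eq_mul_inv, div_le_iff₀ hzA]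
      have e : ε / 3 * (z - A) = ε + P := by
        simp only [hzdef]; field_simp; ring
      rw [e]; linarith
    -- |m_ν - z R_ν| ≤ ε/3 for each supported ν
    have herr : ∀ (ν : Measure ℝ) [IsProbabilityMeasure ν], ν (Set.Icc (-A) A)ᶜ = 0 →
        |(∫ l, l ^ k ∂ν) - z * ∫ l, l ^ k * (z - l)⁻¹ ∂ν| ≤ ε / 3 := by
      intro ν _ hν
      have heq : (∫ l, l ^ k ∂ν) - z * ∫ l, l ^ k * (z - l)⁻¹ ∂ν
          = ∫ l, l ^ k - z * (l ^ k * (z - l)⁻¹) ∂ν := by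
        rw [integral_sub (lp_int_pow hA k hν) ((lp_int_res hA hz1 k hν).const_mul z),
          integral_const_mul]
      rw [heq]
      apply lp_abs_integral_le hν
      intro x hx
      obtain ⟨hx1, hx2⟩ := hx
      have hzx : z - x ≠ 0 := by intro hc; nlinarith [hc]
      have e2 : x ^ k - z * (x ^ k * (z - x)⁻¹) = -(x ^ (k+1) * (z - x)⁻¹) := by
        field_simp; ring
      rw [e2, abs_neg]
      exact le_trans (lp_res_bound hA hz1 (k+1) ⟨hx1, hx2⟩) hB
    obtain ⟨N, hN⟩ := Metric.tendsto_atTop.mp (hres z hz) (ε / (3 * (|z| + 1)))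
      (by positivity)
    refine ⟨N, fun n hn => ?_⟩
    have a1 := hN n hn
    rw [Real.dist_eq] at a1
    have b1 := herr (μs n) (hsupp n)
    have b2 := herr μ hsupp'
    have hzabs : |z| * |(∫ l, l ^ k * (z - l)⁻¹ ∂(μs n)) - ∫ l, l ^ k * (z - l)⁻¹ ∂μ|
        ≤ |z| * (ε / (3 * (|z| + 1))) :=
      mul_le_mul_of_nonneg_left a1.le (abs_nonneg z)
    have hz3 : |z| * (ε / (3 * (|z| + 1))) < ε / 3 := by
      have h0 : (0:ℝ) < 3 * (|z| + 1) := by positivity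
      have e : |z| * (ε / (3 * (|z| + 1))) = ε * |z| / (3 * (|z| + 1)) := by ring
      rw [e, div_lt_div_iff₀ h0 (by norm_num : (0:ℝ) < 3)]
      nlinarith [abs_nonneg z]
    rw [Real.dist_eq]
    set mn := ∫ l, l ^ k ∂(μs n)
    set m := ∫ l, l ^ k ∂μ
    set Rn := ∫ l, l ^ k * (z - l)⁻¹ ∂(μs n)
    set R := ∫ l, l ^ k * (z - l)⁻¹ ∂μ
    have tri : |mn - m| ≤ |mn - z * Rn| + |z * Rn - z * R| + |z * R - m| := by
      have t1 := abs_sub_le mn (z * Rn) m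
      have t2 := abs_sub_le (z * Rn) (z * R) m
      linarith
    have e2 : |z * Rn - z * R| = |z| * |Rn - R| := by rw [← mul_sub, abs_mul]
    have e3 : |z * R - m| = |m - z * R| := abs_sub_comm _ _
    rw [e2, e3] at tri
    calc |mn - m| ≤ |mn - z * Rn| + |z| * |Rn - R| + |m - z * R| := tri
      _ < ε / 3 + ε / 3 + ε / 3 := by
          have := lt_of_le_of_lt hzabs hz3
          refine add_lt_add_of_lt_of_le (add_lt_add_of_le_of_lt b1 this) b2
      _ = ε := by ring
  have hresall : ∀ k : ℕ, ∀ z : ℝ, A + 2 < z →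
      Tendsto (fun n => ∫ l, l ^ k * (z - l)⁻¹ ∂(μs n)) atTop
        (nhds (∫ l, l ^ k * (z - l)⁻¹ ∂μ)) := by
    intro k
    induction k with
    | zero =>
      intro z hz
      simpa using lp_step1 hA hsupp hsupp' h hz
    | succ k ih =>
      intro z hz
      have momk := momstep k ih
      have e : (fun n => ∫ l, l ^ (k+1) * (z - l)⁻¹ ∂(μs n))
          = fun n => z * (∫ l, l ^ k * (z - l)⁻¹ ∂(μs n)) - ∫ l, l ^ k ∂(μs n) :=
        funext fun n => lp_shift hA (by linarith) k (hsupp n)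
      rw [e, lp_shift hA (by linarith) k hsupp']
      exact ((ih z hz).const_mul z).sub momk
  exact fun k => momstep k (hresall k)

private lemma lp_int_poly {A : ℝ} {ν : Measure ℝ} [IsProbabilityMeasure ν]
    (hν : ν (Set.Icc (-A) A)ᶜ = 0) (p : Polynomial ℝ) :
    Integrable (fun l => p.eval l) ν := by
  obtain ⟨C, hC⟩ := IsCompact.exists_bound_of_continuousOn (isCompact_Icc (a := -A) (b := A))
    p.continuous.continuousOn
  exact lp_integrable hν p.continuous.measurable.aestronglyMeasurable
    (C := C) fun x hx => by simpa using hC x hx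

private lemma lp_poly {A : ℝ} (hA : 0 < A) {μs : ℕ → Measure ℝ} {μ : Measure ℝ}
    [∀ n, IsProbabilityMeasure (μs n)] [IsProbabilityMeasure μ]
    (hsupp : ∀ n, μs n (Set.Icc (-A) A)ᶜ = 0) (hsupp' : μ (Set.Icc (-A) A)ᶜ = 0)
    (h : ∀ z : ℝ, A + 1 < z →
      Tendsto (fun n => ∫ l, Real.log (z - l) ∂(μs n)) atTop
        (nhds (∫ l, Real.log (z - l) ∂μ)))
    (p : Polynomial ℝ) :
    Tendsto (fun n => ∫ l, p.eval l ∂(μs n)) atTop (nhds (∫ l, p.eval l ∂μ)) := by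
  induction p using Polynomial.induction_on with
  | C a =>
    simp only [Polynomial.eval_C, integral_const, probReal_univ, one_smul]
    exact tendsto_const_nhds
  | add p q ihp ihq =>
    have e : (fun n => ∫ l, (p + q).eval l ∂(μs n))
        = fun n => (∫ l, p.eval l ∂(μs n)) + ∫ l, q.eval l ∂(μs n) := by
      funext n
      simp only [Polynomial.eval_add]
      exact integral_add (lp_int_poly (hsupp n) p) (lp_int_poly (hsupp n) q)
    have e' : ∫ l, (p + q).eval l ∂μ = (∫ l, p.eval l ∂μ) + ∫ l, q.eval l ∂μ := by
      simp only [Polynomial.eval_add]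
      exact integral_add (lp_int_poly hsupp' p) (lp_int_poly hsupp' q)
    rw [e, e']
    exact ihp.add ihq
  | monomial k a ih =>
    have e : ∀ (ν : Measure ℝ), (∫ l, (Polynomial.C a * Polynomial.X ^ (k+1)).eval l ∂ν)
        = a * ∫ l, l ^ (k+1) ∂ν := by
      intro ν
      simp only [Polynomial.eval_mul, Polynomial.eval_C, Polynomial.eval_pow,
        Polynomial.eval_X]
      exact integral_const_mul a _
    simp only [e]
    exact (lp_mom hA hsupp hsupp' h (k+1)).const_mul a

/-- Let `A > 0`, let `(μ_n)` be Borel probability measures on `ℝ` all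
supported in `[-A, A]`, and let `μ` be a Borel probability measure supported in `[-A, A]`.
If for every real `z > A + 1` one has `∫ log (z - λ) dμ_n(λ) → ∫ log (z - λ) dμ(λ)` as
`n → ∞`, then `μ_n` converges weakly to `μ`, i.e. `∫ f dμ_n → ∫ f dμ` for every bounded
continuous `f : ℝ → ℝ`. -/
theorem logPotential_tendsto_implies_weak_convergence
    (A : ℝ) (hA : 0 < A) (μs : ℕ → Measure ℝ) (μ : Measure ℝ)
    [∀ n, IsProbabilityMeasure (μs n)] [IsProbabilityMeasure μ]
    (hsupp : ∀ n, μs n (Set.Icc (-A) A)ᶜ = 0) (hsupp' : μ (Set.Icc (-A) A)ᶜ = 0)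
    (h : ∀ z : ℝ, A + 1 < z →
      Tendsto (fun n => ∫ l, Real.log (z - l) ∂(μs n)) atTop
        (nhds (∫ l, Real.log (z - l) ∂μ))) :
    ∀ f : BoundedContinuousFunction ℝ ℝ,
      Tendsto (fun n => ∫ x, f x ∂(μs n)) atTop (nhds (∫ x, f x ∂μ)) := by
  intro f
  rw [Metric.tendsto_atTop]
  intro ε hε
  obtain ⟨p, hp⟩ := exists_polynomial_near_of_continuousOn (-A) A f
    f.continuous.continuousOn (ε/4) (by linarith)
  -- |∫ f dν − ∫ p dν| ≤ ε/4 for supported ν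
  have hclose : ∀ (ν : Measure ℝ) [IsProbabilityMeasure ν], ν (Set.Icc (-A) A)ᶜ = 0 →
      |(∫ x, f x ∂ν) - ∫ x, p.eval x ∂ν| ≤ ε / 4 := by
    intro ν _ hν
    have hintf : Integrable (fun x => f x) ν :=
      lp_integrable hν f.continuous.measurable.aestronglyMeasurable (C := ‖f‖)
        fun x _ => by simpa using f.norm_coe_le_norm x
    rw [← integral_sub hintf (lp_int_poly hν p)]
    apply lp_abs_integral_le hν
    intro x hx
    have := hp x hx
    rw [abs_sub_comm] at this
    exact this.le
  obtain ⟨N, hN⟩ := Metric.tendsto_atTop.mp (lp_poly hA hsupp hsupp' h p) (ε/4)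
    (by linarith)
  refine ⟨N, fun n hn => ?_⟩
  have a1 := hN n hn
  rw [Real.dist_eq] at a1 ⊢
  have b1 := hclose (μs n) (hsupp n)
  have b2 := hclose μ hsupp'
  set u1 := ∫ x, f x ∂(μs n)
  set u2 := ∫ x, p.eval x ∂(μs n)
  set u3 := ∫ x, p.eval x ∂μ
  set u4 := ∫ x, f x ∂μ
  have tri : |u1 - u4| ≤ |u1 - u2| + |u2 - u3| + |u3 - u4| := by
    have t1 := abs_sub_le u1 u2 u4
    have t2 := abs_sub_le u2 u3 u4
    linarith
  have b2' : |u3 - u4| ≤ ε / 4 := by rw [abs_sub_comm]; exact b2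
  calc |u1 - u4| ≤ |u1 - u2| + |u2 - u3| + |u3 - u4| := tri
    _ < ε/4 + ε/4 + ε/4 := by
        exact add_lt_add_of_lt_of_le (add_lt_add_of_le_of_lt b1 a1) b2'
    _ < ε := by linarith
end
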